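/- arXiv:1811.08474 — 3 statements merged into one kernel-verified Lean document; each statement's English description precedes it below -/
import Mathlib

section
/- Let p_1, p_2, …, p_{N+1} be a dual path and write p̄_{t+1} := E(p_{t+1}|F_t). Then for any path y_0, y_1, …, y_N, the random sequence (p_{t+1}·y_t)_{t=0}^N is a supermartingale with respect to the filtration F_1 ⊆ F_2 ⊆ … ⊆ F_{N+1}, and the random sequence (p̄_{t+1}·y_t)_{t=0}^N is a supermartingale with respect to the filtration F_0 ⊆ F_1 ⊆ … ⊆ F_N. -/
open MeasureTheory

noncomputable section

/-- Scalar product of two vectors in `ℝ^k`. -/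
def dot {k : ℕ} (p a : Fin k → ℝ) : ℝ := ∑ i, p i * a i

/-- `ℓ¹`-norm of a vector in `ℝ^k` (sum of absolute values of the coordinates). -/
def l1 {k : ℕ} (a : Fin k → ℝ) : ℝ := ∑ i, |a i|

/-- The dual cone of a set `X ⊆ ℝ^k`. -/
def dualCone {k : ℕ} (X : Set (Fin k → ℝ)) : Set (Fin k → ℝ) :=
  {p | ∀ a ∈ X, 0 ≤ dot p a}

/-- Positive part of the (extended) logarithm, as an extended nonnegative real. -/
def logPos (r : ℝ) : ENNReal := ENNReal.ofReal (Real.log r)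

/-- Negative part of the (extended) logarithm, with the convention `ln 0 = -∞`
(and also `ln r = -∞` for `r < 0`, a case that never occurs below). -/
def logNeg (r : ℝ) : ENNReal := if r ≤ 0 then ⊤ else ENNReal.ofReal (-(Real.log r))

/-- `elogLE μ f g` expresses the inequality `E ln f ≤ E ln g` of (possibly infinite)
expectations of logarithms, with the convention `ln 0 = -∞`:
it says `E (ln f)⁺ + E (ln g)⁻ ≤ E (ln g)⁺ + E (ln f)⁻` in `[0,∞]`. -/
def elogLE {Ω : Type*} [MeasurableSpace Ω] (μ : Measure Ω) (f g : Ω → ℝ) : Prop :=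
  (∫⁻ ω, logPos (f ω) ∂μ) + (∫⁻ ω, logNeg (g ω) ∂μ) ≤
    (∫⁻ ω, logPos (g ω) ∂μ) + (∫⁻ ω, logNeg (f ω) ∂μ)

/-- Membership in `L_∞(Ω, Ft, P; ℝ^k)`: `Ft`-measurable and essentially bounded. -/
def MemLinf {Ω : Type*} [MeasurableSpace Ω] (μ : Measure Ω) (Ft : MeasurableSpace Ω)
    {k : ℕ} (x : Ω → Fin k → ℝ) : Prop :=
  Measurable[Ft] x ∧ ∃ C : ℝ, ∀ᵐ ω ∂μ, l1 (x ω) ≤ C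

/-- The setting of a stochastic von Neumann–Gale dynamical system over the time
horizon `N`, with state dimensions `m t`:  a filtration `F`, random closed cones
`X t ω ⊆ ℝ^{m t}` and random closed convex cones
`Z t ω ⊆ X (t-1) ω × X t ω` (for `1 ≤ t ≤ N`) with measurable graphs, the
projection of `Z t ω` on the first factor being `X (t-1) ω`. -/
structure VNG (Ω : Type*) [m0 : MeasurableSpace Ω] (μ : Measure Ω) (N : ℕ) (m : ℕ → ℕ) where
  F : ℕ → MeasurableSpace Ω
  X : (t : ℕ) → Ω → Set (Fin (m t) → ℝ)
  Z : (t : ℕ) → Ω → Set ((Fin (m (t - 1)) → ℝ) × (Fin (m t) → ℝ))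
  F_mono : Monotone F
  F_le : ∀ t, F t ≤ m0
  F_top : F N = m0
  F_ext : F (N + 1) = F N
  F_null : ∀ t (s : Set Ω), μ s = 0 → MeasurableSet[F t] s
  X_closed : ∀ t, t ≤ N → ∀ ω, IsClosed (X t ω)
  X_cone : ∀ t, t ≤ N → ∀ ω, ∀ a ∈ X t ω, ∀ c : ℝ, 0 ≤ c → c • a ∈ X t ω
  X_meas : ∀ t, t ≤ N →
    MeasurableSet[(F t).prod inferInstance] {q : Ω × (Fin (m t) → ℝ) | q.2 ∈ X t q.1}
  Z_closed : ∀ t, 1 ≤ t → t ≤ N → ∀ ω, IsClosed (Z t ω)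
  Z_convex : ∀ t, 1 ≤ t → t ≤ N → ∀ ω, Convex ℝ (Z t ω)
  Z_cone : ∀ t, 1 ≤ t → t ≤ N → ∀ ω, ∀ q ∈ Z t ω, ∀ c : ℝ, 0 ≤ c → c • q ∈ Z t ω
  Z_sub : ∀ t, 1 ≤ t → t ≤ N → ∀ ω, Z t ω ⊆ (X (t - 1) ω) ×ˢ (X t ω)
  Z_meas : ∀ t, 1 ≤ t → t ≤ N →
    MeasurableSet[(F t).prod inferInstance]
      {q : Ω × ((Fin (m (t - 1)) → ℝ) × (Fin (m t) → ℝ)) | q.2 ∈ Z t q.1}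
  Z_proj : ∀ t, 1 ≤ t → t ≤ N → ∀ ω, Prod.fst '' (Z t ω) = X (t - 1) ω

namespace VNG

variable {Ω : Type*} [m0 : MeasurableSpace Ω] {μ : Measure Ω} {N : ℕ} {m : ℕ → ℕ}

/-- A random state of the system at time `t`: an element of `𝒳_t`. -/
def RandomState (S : VNG Ω μ N m) (t : ℕ) (x : Ω → Fin (m t) → ℝ) : Prop :=
  MemLinf μ (S.F t) x ∧ ∀ᵐ ω ∂μ, x ω ∈ S.X t ω

/-- A path (trajectory) of the system: random states `x 0, …, x N` with
`(x (t-1) ω, x t ω) ∈ Z t ω` a.s. for `t = 1, …, N`. -/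
def IsPath (S : VNG Ω μ N m) (x : (t : ℕ) → Ω → Fin (m t) → ℝ) : Prop :=
  (∀ t, t ≤ N → S.RandomState t (x t)) ∧
  (∀ t, 1 ≤ t → t ≤ N → ∀ᵐ ω ∂μ, (x (t - 1) ω, x t ω) ∈ S.Z t ω)

/-- A dual path: integrable `F t`-measurable `p t`, `t = 1, …, N+1`, with values in the
dual cones `X_{t-1}^*` a.s., such that `E(p_{t+1} | F_t)·b ≤ p_t·a` for all
`(a,b) ∈ Z t ω`, almost surely, for `t = 1, …, N`. -/
def IsDualPath (S : VNG Ω μ N m) (p : (t : ℕ) → Ω → Fin (m (t - 1)) → ℝ) : Prop :=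
  (∀ t, 1 ≤ t → t ≤ N + 1 →
    Measurable[S.F t] (p t) ∧ Integrable (p t) μ ∧
      ∀ᵐ ω ∂μ, p t ω ∈ dualCone (S.X (t - 1) ω)) ∧
  (∀ t, 1 ≤ t → t ≤ N →
    ∀ᵐ ω ∂μ, ∀ ab ∈ S.Z t ω, dot ((μ[p (t + 1) | S.F t]) ω) ab.2 ≤ dot (p t ω) ab.1)

/-- The dual path `p` supports the path `x`: `p_{t+1}·x_t = 1` a.s. for `t = 0, …, N`. -/
def Supports (S : VNG Ω μ N m) (p : (t : ℕ) → Ω → Fin (m (t - 1)) → ℝ)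
    (x : (t : ℕ) → Ω → Fin (m t) → ℝ) : Prop :=
  ∀ t, t ≤ N → ∀ᵐ ω ∂μ, dot (p (t + 1) ω) (x t ω) = 1

/-- A path is rapid if some dual path supports it. -/
def Rapid (S : VNG Ω μ N m) (x : (t : ℕ) → Ω → Fin (m t) → ℝ) : Prop :=
  ∃ p, S.IsDualPath p ∧ S.Supports p x

/-- Assumption (A1). -/
def A1 (S : VNG Ω μ N m) : Prop :=
  ∀ t, t ≤ N → ∃ (q : Ω → Fin (m t) → ℝ) (H : Ω → ℝ),
    Measurable[S.F t] q ∧ Measurable[S.F t] H ∧ (∀ ω, 1 ≤ H ω) ∧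
    Integrable (fun ω => Real.log (H ω)) μ ∧
    (∀ ω, q ω ∈ dualCone (S.X t ω)) ∧
    (∀ ω, ∀ a ∈ S.X t ω, (H ω)⁻¹ * l1 a ≤ dot (q ω) a ∧ dot (q ω) a ≤ H ω * l1 a)

/-- Assumption (A2). -/
def A2 (S : VNG Ω μ N m) : Prop :=
  ∀ t, 1 ≤ t → t ≤ N → ∀ ω, ∀ a ∈ S.X (t - 1) ω, ∃ b ∈ S.X t ω, (a, b) ∈ S.Z t ω

/-- Assumption (A3). -/
def A3 (S : VNG Ω μ N m) : Prop :=
  ∃ K : ℕ → ℝ, ∀ t, 1 ≤ t → t ≤ N → ∀ ω, ∀ ab ∈ S.Z t ω, l1 ab.2 ≤ K t * l1 ab.1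

/-- Assumption (A4). -/
def A4 (S : VNG Ω μ N m) : Prop :=
  ∀ t, 1 ≤ t → t ≤ N →
    ∃ (x' : Ω → Fin (m (t - 1)) → ℝ) (y' : Ω → Fin (m t) → ℝ) (C ε : ℝ),
      0 < ε ∧ Measurable[S.F t] x' ∧ Measurable[S.F t] y' ∧
      (∀ ω, l1 (x' ω) ≤ C ∧ l1 (y' ω) ≤ C) ∧
      (∀ ω, (x' ω, y' ω) ∈ S.Z t ω) ∧
      (∀ ω, ∀ b, l1 (b - y' ω) ≤ ε → b ∈ S.X t ω)

open Classical in
/-- Membership in the class `Ψ_N` of utility functions. -/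
def MemPsi (S : VNG Ω μ N m) (ψ : Ω → (Fin (m N) → ℝ) → ℝ) : Prop :=
  (∀ ω, ∀ a ∈ S.X N ω, 0 ≤ ψ ω a) ∧
  (∀ ω, ContinuousOn (ψ ω) (S.X N ω)) ∧
  Measurable[(S.F N).prod inferInstance]
    (fun q : Ω × (Fin (m N) → ℝ) =>
      if q.2 ∈ S.X N q.1 then ((ψ q.1 q.2 : ℝ) : EReal) else (⊤ : EReal)) ∧
  (∀ ω, ∀ a ∈ S.X N ω, ∀ a' ∈ S.X N ω, ψ ω a + ψ ω a' ≤ ψ ω (a + a')) ∧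
  (∀ ω, ∀ a ∈ S.X N ω, ∀ c : ℝ, 0 ≤ c → ψ ω (c • a) = c * ψ ω a) ∧
  ∃ Hψ : Ω → ℝ, (∀ ω, 0 < Hψ ω) ∧
    Integrable (fun ω => |Real.log (Hψ ω)|) μ ∧
    (∀ ω, ∀ a ∈ S.X N ω, (Hψ ω)⁻¹ * l1 a ≤ ψ ω a ∧ ψ ω a ≤ Hψ ω * l1 a)

/-- The fixed initial state `x₀`: `F 0`-measurable, essentially bounded, with a ball
`B(x₀(ω), ε₀) ⊆ X 0 ω` a.s. for some constant `ε₀ > 0`. -/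
def IsInitial (S : VNG Ω μ N m) (x₀ : Ω → Fin (m 0) → ℝ) : Prop :=
  Measurable[S.F 0] x₀ ∧ (∃ C : ℝ, ∀ᵐ ω ∂μ, l1 (x₀ ω) ≤ C) ∧
  ∃ ε₀ : ℝ, 0 < ε₀ ∧ ∀ᵐ ω ∂μ, ∀ b, l1 (b - x₀ ω) ≤ ε₀ → b ∈ S.X 0 ω

/-- Membership in the set `𝒲` of sequences `ζ = (v₀, u₁, v₁, …, u_N, v_N, u_{N+1})`. -/
def MemW (S : VNG Ω μ N m) (ψ : Ω → (Fin (m N) → ℝ) → ℝ) (x₀ : Ω → Fin (m 0) → ℝ)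
    (v : (t : ℕ) → Ω → Fin (m t) → ℝ) (u : (t : ℕ) → Ω → Fin (m (t - 1)) → ℝ) : Prop :=
  v 0 = x₀ ∧
  (∀ t, t ≤ N → S.RandomState t (v t)) ∧
  (∀ t, 1 ≤ t → t ≤ N + 1 → MemLinf μ (S.F t) (u t) ∧ ∀ᵐ ω ∂μ, u t ω ∈ S.X (t - 1) ω) ∧
  (∀ t, 1 ≤ t → t ≤ N → ∀ᵐ ω ∂μ, (u t ω, v t ω) ∈ S.Z t ω) ∧
  (∫⁻ ω, logNeg (ψ ω (u (N + 1) ω)) ∂μ) < ⊤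

end VNG


section Helpers

open MeasureTheory Filter

variable {Ω : Type*}

lemma my_condexp_apply_coord {F : MeasurableSpace Ω} [m0 : MeasurableSpace Ω]
    {μ : Measure Ω} [IsProbabilityMeasure μ] (hF : F ≤ m0)
    {k : ℕ} {f : Ω → Fin k → ℝ} (hf : Integrable f μ) (i : Fin k) :
    (fun ω => (μ[f|F]) ω i) =ᵐ[μ] μ[fun ω => f ω i|F] := by
  set L := ContinuousLinearMap.proj (R := ℝ) (φ := fun _ : Fin k => ℝ) i with hL
  have h1 : Integrable (fun ω => L (f ω)) μ := L.integrable_comp hf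
  have h2 : Integrable (fun ω => L ((μ[f|F]) ω)) μ := L.integrable_comp integrable_condExp
  refine ae_eq_condExp_of_forall_setIntegral_eq hF h1 ?_ (fun s hs hμs => ?_) ?_
  · exact fun s _ _ => h2.integrableOn
  · show ∫ ω in s, L ((μ[f|F]) ω) ∂μ = ∫ ω in s, L (f ω) ∂μ
    rw [L.integral_comp_comm integrable_condExp.integrableOn,
      L.integral_comp_comm hf.integrableOn,
      setIntegral_condExp hF hf hs]
  · exact StronglyMeasurable.aestronglyMeasurable
      (L.continuous.comp_stronglyMeasurable stronglyMeasurable_condExp)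

lemma my_coord_bound {k : ℕ} (a : Fin k → ℝ) (i : Fin k) : |a i| ≤ l1 a :=
  Finset.single_le_sum (f := fun j => |a j|) (fun j _ => abs_nonneg _) (Finset.mem_univ i)

lemma my_dot_integrable {F : MeasurableSpace Ω} [m0 : MeasurableSpace Ω]
    {μ : Measure Ω} [IsProbabilityMeasure μ] (hF : F ≤ m0)
    {k : ℕ} {p x : Ω → Fin k → ℝ} (hp : Integrable p μ) (hx : Measurable[F] x)
    {C : ℝ} (hC : ∀ᵐ ω ∂μ, l1 (x ω) ≤ C) :
    Integrable (fun ω => dot (p ω) (x ω)) μ := by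
  have h : (fun ω => dot (p ω) (x ω)) = fun ω => ∑ i, x ω i * p ω i := by
    funext ω; simp [dot, mul_comm]
  rw [h]
  refine integrable_finset_sum _ fun i _ => ?_
  have hpi : Integrable (fun ω => p ω i) μ :=
    (ContinuousLinearMap.proj (R := ℝ) (φ := fun _ : Fin k => ℝ) i).integrable_comp hp
  refine hpi.bdd_mul (c := C) (((measurable_pi_apply i).comp hx).mono hF le_rfl).aestronglyMeasurable ?_
  filter_upwards [hC] with ω hω
  exact (my_coord_bound (x ω) i).trans hω

lemma my_condexp_dot {F : MeasurableSpace Ω} [m0 : MeasurableSpace Ω]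
    {μ : Measure Ω} [IsProbabilityMeasure μ] (hF : F ≤ m0)
    {k : ℕ} {p x : Ω → Fin k → ℝ} (hp : Integrable p μ) (hx : Measurable[F] x)
    {C : ℝ} (hC : ∀ᵐ ω ∂μ, l1 (x ω) ≤ C) :
    μ[fun ω => dot (p ω) (x ω)|F] =ᵐ[μ] fun ω => dot ((μ[p|F]) ω) (x ω) := by
  have hxi : ∀ i : Fin k, StronglyMeasurable[F] (fun ω => x ω i) := fun i =>
    ((measurable_pi_apply i).comp hx).stronglyMeasurable
  have hbd : ∀ i : Fin k, ∀ᵐ ω ∂μ, ‖x ω i‖ ≤ C := fun i => by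
    filter_upwards [hC] with ω hω
    exact (my_coord_bound (x ω) i).trans hω
  have hpi : ∀ i : Fin k, Integrable (fun ω => p ω i) μ := fun i =>
    (ContinuousLinearMap.proj (R := ℝ) (φ := fun _ : Fin k => ℝ) i).integrable_comp hp
  have hterm : ∀ i : Fin k, Integrable (fun ω => x ω i * p ω i) μ := fun i =>
    (hpi i).bdd_mul ((hxi i).mono hF).aestronglyMeasurable (hbd i)
  have hmul : ∀ i : Fin k,
      μ[fun ω => x ω i * p ω i|F] =ᵐ[μ] fun ω => x ω i * (μ[fun ω => p ω i|F]) ω := fun i =>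
    condExp_stronglyMeasurable_mul_of_bound hF (hxi i) (hpi i) C (hbd i)
  have hrepr : (fun ω => dot (p ω) (x ω)) = ∑ i : Fin k, (fun ω => x ω i * p ω i) := by
    funext ω; simp [dot, Finset.sum_apply, mul_comm]
  calc μ[fun ω => dot (p ω) (x ω)|F]
      =ᵐ[μ] ∑ i : Fin k, μ[fun ω => x ω i * p ω i|F] := by
        rw [hrepr]; exact condExp_finsetSum (fun i _ => hterm i) F
    _ =ᵐ[μ] ∑ i : Fin k, (fun ω => x ω i * (μ[fun ω => p ω i|F]) ω) :=
        eventuallyEq_sum fun i _ => hmul i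
    _ =ᵐ[μ] ∑ i : Fin k, (fun ω => x ω i * (μ[p|F]) ω i) :=
        eventuallyEq_sum fun i _ => by
          filter_upwards [my_condexp_apply_coord hF hp i] with ω hω
          rw [hω]
    _ = fun ω => dot ((μ[p|F]) ω) (x ω) := by
        funext ω; simp [dot, Finset.sum_apply, mul_comm]

lemma my_dot_sm {F : MeasurableSpace Ω} {k : ℕ} {p x : Ω → Fin k → ℝ}
    (hp : StronglyMeasurable[F] p) (hx : Measurable[F] x) :
    StronglyMeasurable[F] fun ω => dot (p ω) (x ω) := by
  have h : (fun ω => dot (p ω) (x ω)) = fun ω => ∑ i, p ω i * x ω i := by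
    funext ω; simp [dot]
  rw [h]
  exact Finset.stronglyMeasurable_fun_sum _ fun i _ =>
    ((continuous_apply i).comp_stronglyMeasurable hp).mul
      ((measurable_pi_apply i).comp hx).stronglyMeasurable

lemma my_fin_supermartingale [m0 : MeasurableSpace Ω] {μ : Measure Ω}
    [IsProbabilityMeasure μ] {N : ℕ} (ℱ : Filtration (Fin (N + 1)) m0)
    (f : Fin (N + 1) → Ω → ℝ)
    (hadp : ∀ i, StronglyMeasurable[ℱ i] (f i))
    (hint : ∀ i, Integrable (f i) μ)
    (hstep : ∀ (n : ℕ) (h : n + 1 ≤ N),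
      μ[f ⟨n + 1, by omega⟩|ℱ ⟨n, by omega⟩] ≤ᵐ[μ] f ⟨n, by omega⟩) :
    Supermartingale f ℱ μ := by
  refine ⟨fun i => hadp i, ?_, hint⟩
  have main : ∀ (jv : ℕ) (hj : jv < N + 1) (i : Fin (N + 1)), (i : ℕ) ≤ jv →
      μ[f ⟨jv, hj⟩|ℱ i] ≤ᵐ[μ] f i := by
    intro jv
    induction jv with
    | zero =>
      intro hj i hi
      have hieq : i = ⟨0, hj⟩ := Fin.ext (Nat.le_zero.mp hi)
      subst hieq
      rw [condExp_of_stronglyMeasurable (ℱ.le _) (hadp _) (hint _)]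
    | succ n ih =>
      intro hj i hi
      rcases Nat.lt_or_ge (i : ℕ) (n + 1) with h | h
      · have hle : ℱ i ≤ ℱ ⟨n, by omega⟩ := ℱ.mono (Fin.le_def.mpr (by simp; omega))
        have t1 : μ[f ⟨n + 1, hj⟩|ℱ i] =ᵐ[μ] μ[μ[f ⟨n + 1, hj⟩|ℱ ⟨n, by omega⟩]|ℱ i] :=
          (condExp_condExp_of_le hle (ℱ.le _)).symm
        have t2 : μ[μ[f ⟨n + 1, hj⟩|ℱ ⟨n, by omega⟩]|ℱ i] ≤ᵐ[μ] μ[f ⟨n, by omega⟩|ℱ i] :=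
          condExp_mono integrable_condExp (hint _) (hstep n (by omega))
        have t3 := ih (by omega) i (by omega)
        exact t1.trans_le (t2.trans t3)
      · have hieq : i = ⟨n + 1, hj⟩ := Fin.ext (le_antisymm hi h)
        subst hieq
        rw [condExp_of_stronglyMeasurable (ℱ.le _) (hadp _) (hint _)]
  intro i j hij
  exact main j.1 j.2 i hij

end Helpers

open MeasureTheory in
/-- **Proposition 3**: for a dual path `p` and any path `y`, the sequence
`(p_{t+1}·y_t)_{t=0}^N` is a supermartingale w.r.t. the filtration
`F_1 ⊆ … ⊆ F_{N+1}`, and the sequence `(p̄_{t+1}·y_t)_{t=0}^N`, where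
`p̄_{t+1} = E(p_{t+1}|F_t)`, is a supermartingale w.r.t. `F_0 ⊆ … ⊆ F_N`. -/
theorem dual_path_supermartingale
    {Ω : Type*} [m0 : MeasurableSpace Ω] {μ : MeasureTheory.Measure Ω}
    [MeasureTheory.IsProbabilityMeasure μ]
    {N : ℕ} {m : ℕ → ℕ} (S : VNG Ω μ N m)
    (p : (t : ℕ) → Ω → Fin (m (t - 1)) → ℝ) (hp : S.IsDualPath p)
    (y : (t : ℕ) → Ω → Fin (m t) → ℝ) (hy : S.IsPath y)
    (G H : MeasureTheory.Filtration (Fin (N + 1)) m0)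
    (hG : ∀ i : Fin (N + 1), G i = S.F ((i : ℕ) + 1))
    (hH : ∀ i : Fin (N + 1), H i = S.F (i : ℕ)) :
    MeasureTheory.Supermartingale
      (fun (i : Fin (N + 1)) ω => dot (p ((i : ℕ) + 1) ω) (y (i : ℕ) ω)) G μ ∧
    MeasureTheory.Supermartingale
      (fun (i : Fin (N + 1)) ω =>
        dot ((μ[p ((i : ℕ) + 1) | S.F (i : ℕ)]) ω) (y (i : ℕ) ω)) H μ := by
  obtain ⟨hp1, hp2⟩ := hp
  obtain ⟨hy1, hy2⟩ := hy
  have hFle : ∀ t, S.F t ≤ m0 := S.F_le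
  have hym : ∀ t, t ≤ N → Measurable[S.F t] (y t) := fun t ht => (hy1 t ht).1.1
  have hyC : ∀ t, t ≤ N → ∃ C : ℝ, ∀ᵐ ω ∂μ, l1 (y t ω) ≤ C := fun t ht => (hy1 t ht).1.2
  have hpm : ∀ t, 1 ≤ t → t ≤ N + 1 → Measurable[S.F t] (p t) := fun t h1 h2 =>
    (hp1 t h1 h2).1
  have hpint : ∀ t, 1 ≤ t → t ≤ N + 1 → Integrable (p t) μ := fun t h1 h2 =>
    (hp1 t h1 h2).2.1
  -- key a.e. inequality
  have keyineq : ∀ n : ℕ, n + 1 ≤ N →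
      (fun ω => dot ((μ[p (n + 1 + 1)|S.F (n + 1)]) ω) (y (n + 1) ω)) ≤ᵐ[μ]
        fun ω => dot (p (n + 1) ω) (y n ω) := by
    intro n hn
    filter_upwards [hp2 (n + 1) (by omega) hn, hy2 (n + 1) (by omega) hn] with ω h1 h2
    exact h1 (y n ω, y (n + 1) ω) h2
  -- integrability of the two processes
  have hint1 : ∀ t, t ≤ N → Integrable (fun ω => dot (p (t + 1) ω) (y t ω)) μ := by
    intro t ht
    obtain ⟨C, hC⟩ := hyC t ht
    exact my_dot_integrable (hFle (t + 1)) (hpint (t + 1) (by omega) (by omega))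
      ((hym t ht).mono (S.F_mono (Nat.le_succ t)) le_rfl) hC
  have hint2 : ∀ t, t ≤ N →
      Integrable (fun ω => dot ((μ[p (t + 1)|S.F t]) ω) (y t ω)) μ := by
    intro t ht
    obtain ⟨C, hC⟩ := hyC t ht
    exact my_dot_integrable (hFle t) integrable_condExp (hym t ht) hC
  -- the pull-out identity at level t
  have pullout : ∀ t, t ≤ N →
      μ[fun ω => dot (p (t + 1) ω) (y t ω)|S.F t] =ᵐ[μ]
        fun ω => dot ((μ[p (t + 1)|S.F t]) ω) (y t ω) := by
    intro t ht
    obtain ⟨C, hC⟩ := hyC t ht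
    exact my_condexp_dot (hFle t) (hpint (t + 1) (by omega) (by omega)) (hym t ht) hC
  constructor
  · refine my_fin_supermartingale G _ ?_ (fun i => hint1 i (by omega)) ?_
    · intro i
      rw [hG i]
      exact my_dot_sm
        ((hpm ((i : ℕ) + 1) (by omega) (by omega)).stronglyMeasurable)
        ((hym (i : ℕ) (by omega)).mono (S.F_mono (Nat.le_succ _)) le_rfl)
    · intro n hn
      rw [hG ⟨n, by omega⟩]
      show μ[fun ω => dot (p (n + 1 + 1) ω) (y (n + 1) ω)|S.F (n + 1)] ≤ᵐ[μ]
        fun ω => dot (p (n + 1) ω) (y n ω)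
      exact (pullout (n + 1) hn).trans_le (keyineq n hn)
  · refine my_fin_supermartingale H _ ?_ (fun i => hint2 i (by omega)) ?_
    · intro i
      rw [hH i]
      exact my_dot_sm stronglyMeasurable_condExp (hym (i : ℕ) (by omega))
    · intro n hn
      rw [hH ⟨n, by omega⟩]
      show μ[fun ω => dot ((μ[p (n + 1 + 1)|S.F (n + 1)]) ω) (y (n + 1) ω)|S.F n] ≤ᵐ[μ]
        fun ω => dot ((μ[p (n + 1)|S.F n]) ω) (y n ω)
      calc μ[fun ω => dot ((μ[p (n + 1 + 1)|S.F (n + 1)]) ω) (y (n + 1) ω)|S.F n]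
          ≤ᵐ[μ] μ[fun ω => dot (p (n + 1) ω) (y n ω)|S.F n] :=
            condExp_mono (hint2 (n + 1) hn) (hint1 n (by omega)) (keyineq n hn)
        _ =ᵐ[μ] fun ω => dot ((μ[p (n + 1)|S.F n]) ω) (y n ω) := pullout n (by omega)
end
end

section
/- For every t ∈ {1,…,N} and every u ∈ 𝒰_t, there exists v ∈ 𝒱_t such that (u, v) ∈ 𝒲_t, i.e. (u(ω), v(ω)) ∈ Z_t(ω) almost surely. -/
open MeasureTheory

noncomputable section

section SelectionMachinery

open Filter Topology Set ENNReal


theorem exists_factorization {Ω Y : Type*} [mY : MeasurableSpace Y] (G : MeasurableSpace Ω)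
    {A : Set (Ω × Y)} (hA : MeasurableSet[G.prod inferInstance] A) :
    ∃ (φ : Ω → (ℕ → Bool)) (B : Set ((ℕ → Bool) × Y)),
      Measurable[G] φ ∧ MeasurableSet B ∧ A = (fun p : Ω × Y => (φ p.1, p.2)) ⁻¹' B := by
  classical
  set P : Set (Ω × Y) → Prop := fun A =>
    ∃ (φ : Ω → (ℕ → Bool)) (B : Set ((ℕ → Bool) × Y)),
      Measurable[G] φ ∧ MeasurableSet B ∧ A = (fun p : Ω × Y => (φ p.1, p.2)) ⁻¹' B with hP
  have hempty : P ∅ := by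
    refine ⟨fun _ _ => true, ∅, measurable_const, MeasurableSet.empty, by simp⟩
  have hcompl : ∀ s, P s → P sᶜ := by
    rintro s ⟨φ, B, hφ, hB, rfl⟩
    exact ⟨φ, Bᶜ, hφ, hB.compl, rfl⟩
  have hunion : ∀ s : ℕ → Set (Ω × Y), (∀ n, P (s n)) → P (⋃ n, s n) := by
    intro s hs
    choose φ B hφ hB hrep using hs
    refine ⟨fun ω j => φ (Nat.unpair j).1 ω (Nat.unpair j).2, ?_, ?_, ?_, ?_⟩
    · exact ⋃ n, (fun p : (ℕ → Bool) × Y => (fun i => p.1 (Nat.pair n i), p.2)) ⁻¹' (B n)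
    · exact measurable_pi_lambda _ fun j =>
        (measurable_pi_apply _).comp (hφ (Nat.unpair j).1)
    · refine MeasurableSet.iUnion fun n => ?_
      refine MeasurableSet.preimage (hB n) ?_
      exact Measurable.prodMk
        ((measurable_pi_lambda _ fun i => measurable_pi_apply (Nat.pair n i)).comp measurable_fst)
        measurable_snd
    · ext p
      simp only [Set.mem_iUnion, Set.mem_preimage, Nat.unpair_pair]
      constructor
      · rintro ⟨n, hn⟩
        refine ⟨n, ?_⟩
        have : (fun i => φ (Nat.unpair (Nat.pair n i)).1 p.1 (Nat.unpair (Nat.pair n i)).2) = φ n p.1 := by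
          funext i; rw [Nat.unpair_pair]
        rw [hrep n] at hn
        simpa [this] using hn
      · rintro ⟨n, hn⟩
        refine ⟨n, ?_⟩
        have : (fun i => φ (Nat.unpair (Nat.pair n i)).1 p.1 (Nat.unpair (Nat.pair n i)).2) = φ n p.1 := by
          funext i; rw [Nat.unpair_pair]
        rw [hrep n]
        simpa [this] using hn
  let M : MeasurableSpace (Ω × Y) :=
    { MeasurableSet' := P
      measurableSet_empty := hempty
      measurableSet_compl := hcompl
      measurableSet_iUnion := hunion }
  have hle : G.prod mY ≤ M := by
    rw [MeasurableSpace.prod]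
    refine sup_le ?_ ?_
    · rintro s ⟨s', hs', rfl⟩
      refine ⟨fun ω _ => if ω ∈ s' then true else false, {p | p.1 0 = true}, ?_, ?_, ?_⟩
      · exact measurable_pi_lambda _ fun _ =>
          Measurable.ite hs' measurable_const measurable_const
      · have : Measurable fun p : (ℕ → Bool) × Y => p.1 0 :=
          (measurable_pi_apply 0).comp measurable_fst
        exact this (measurableSet_singleton true)
      · ext p; by_cases h : p.1 ∈ s' <;> simp [h]
    · rintro s ⟨s', hs', rfl⟩
      exact ⟨fun _ _ => true, {p | p.2 ∈ s'}, measurable_const,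
        measurable_snd hs', rfl⟩
  exact hle A hA


theorem analytic_inner {X : Type*} [TopologicalSpace X] [T2Space X] [FirstCountableTopology X]
    [MeasurableSpace X] [BorelSpace X] {f : (ℕ → ℕ) → X} (hf : Continuous f)
    (ν : Measure X) [IsFiniteMeasure ν] {r : ℝ≥0∞} (hr : r < ν (Set.range f)) :
    ∃ K : Set X, MeasurableSet K ∧ K ⊆ Set.range f ∧ r ≤ ν K := by
  classical
  set E : (ℕ → ℕ) → ℕ → Set (ℕ → ℕ) := fun g n => {x | ∀ i, i < n → x i ≤ g i} with hE
  -- step existence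
  have step : ∀ (g : ℕ → ℕ) (n : ℕ), r < ν (f '' E g n) →
      ∃ j, r < ν (f '' E (Function.update g n j) (n + 1)) := by
    intro g n hgn
    have hmono : Monotone fun j => f '' E (Function.update g n j) (n + 1) := by
      intro j j' hjj
      apply Set.image_mono
      intro x hx i hi
      rcases Nat.lt_succ_iff_lt_or_eq.mp hi with hi' | rfl
      · rw [Function.update_of_ne hi'.ne]
        have := hx i hi
        rwa [Function.update_of_ne hi'.ne] at this
      · have := hx i (Nat.lt_succ_self i)
        simp only [Function.update_self] at this ⊢
        exact this.trans hjj
    have hsets : (⋃ j, E (Function.update g n j) (n + 1)) = E g n := by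
      ext x
      simp only [Set.mem_iUnion, hE, Set.mem_setOf_eq]
      constructor
      · rintro ⟨j, hj⟩ i hi
        have := hj i (Nat.lt_succ_of_lt hi)
        rwa [Function.update_of_ne hi.ne] at this
      · intro hx
        refine ⟨x n, fun i hi => ?_⟩
        rcases Nat.lt_succ_iff_lt_or_eq.mp hi with hi' | rfl
        · rw [Function.update_of_ne hi'.ne]
          exact hx i hi'
        · simp
    have hcover : (⋃ j, f '' E (Function.update g n j) (n + 1)) = f '' E g n := by
      rw [← Set.image_iUnion, hsets]
    have heq := hmono.measure_iUnion (μ := ν)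
    rw [hcover] at heq
    rw [heq] at hgn
    exact lt_iSup_iff.mp hgn
  -- recursive construction
  have base : r < ν (f '' E (fun _ => 0) 0) := by
    have : E (fun _ => 0) 0 = Set.univ := by
      ext x; simp [hE]
    rw [this, Set.image_univ]; exact hr
  let seq : (n : ℕ) → {g : ℕ → ℕ // r < ν (f '' E g n)} :=
    Nat.rec ⟨fun _ => 0, base⟩ (fun n p =>
      ⟨Function.update p.1 n (step p.1 n p.2).choose, (step p.1 n p.2).choose_spec⟩)
  have seq_stable : ∀ n i : ℕ, i < n → ∀ m, n ≤ m → (seq m).1 i = (seq n).1 i := by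
    intro n i hi m hm
    induction m with
    | zero => omega
    | succ m ih =>
      rcases Nat.lt_or_ge m n with h | h
      · have : n = m + 1 := by omega
        subst this; rfl
      · have hrec : (seq (m + 1)).1 = Function.update (seq m).1 m
            (step (seq m).1 m (seq m).2).choose := rfl
        rw [hrec, Function.update_of_ne (by omega : i ≠ m), ih h]
  set K : ℕ → ℕ := fun i => (seq (i + 1)).1 i with hK
  have hEK : ∀ n, E K n = E (seq n).1 n := by
    intro n
    ext x
    simp only [hE, Set.mem_setOf_eq]
    constructor
    · intro hx i hi
      have h2 := seq_stable (i + 1) i (Nat.lt_succ_self i) n (by omega)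
      rw [h2]
      exact hx i hi
    · intro hx i hi
      have h2 := seq_stable (i + 1) i (Nat.lt_succ_self i) n (by omega)
      show x i ≤ (seq (i + 1)).1 i
      rw [← h2]
      exact hx i hi
  have hInv : ∀ n, r < ν (f '' E K n) := fun n => by rw [hEK n]; exact (seq n).2
  -- the compact set
  set Einf : Set (ℕ → ℕ) := Set.univ.pi (fun i => Set.Iic (K i)) with hEinf
  have hEinfc : IsCompact Einf := isCompact_univ_pi fun i => (Set.finite_Iic (K i)).isCompact
  have hsub : ∀ n, Einf ⊆ E K n := by
    intro n x hx i _
    exact hx i (Set.mem_univ i)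
  refine ⟨f '' Einf, ((hEinfc.image hf).isClosed).measurableSet, Set.image_subset_range _ _, ?_⟩
  -- ⋂ closure ⊆ f '' Einf
  have hinter : (⋂ n, closure (f '' E K n)) ⊆ f '' Einf := by
    intro y hy
    obtain ⟨U, hU⟩ := (𝓝 y).exists_antitone_basis
    have hx : ∀ n, ∃ x, x ∈ E K n ∧ f x ∈ U n := by
      intro n
      have hyc : y ∈ closure (f '' E K n) := Set.mem_iInter.mp hy n
      rcases mem_closure_iff_nhds.mp hyc (U n) (hU.1.mem_of_mem trivial) with ⟨z, hz1, x, hx1, rfl⟩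
      exact ⟨x, hx1, hz1⟩
    choose x hxE hxU using hx
    set x' : ℕ → ℕ → ℕ := fun n i => min (x n i) (K i) with hx'
    have hx'mem : ∀ n, x' n ∈ Einf := by
      intro n
      simp only [hEinf, Set.mem_univ_pi, Set.mem_Iic]
      intro i
      exact min_le_right _ _
    letI := TopologicalSpace.upgradeIsCompletelyMetrizable (ℕ → ℕ)
    obtain ⟨a, haE, φ, hφ, hconv⟩ := hEinfc.tendsto_subseq hx'mem
    have hxconv : Tendsto (fun j => x (φ j)) atTop (𝓝 a) := by
      rw [tendsto_pi_nhds]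
      intro i
      have h1 : Tendsto (fun j => x' (φ j) i) atTop (𝓝 (a i)) :=
        (continuous_apply i).continuousAt.tendsto.comp hconv
      refine h1.congr' ?_
      filter_upwards [eventually_gt_atTop i] with j hj
      have : x (φ j) i ≤ K i := hxE (φ j) i (lt_of_lt_of_le hj (hφ.id_le j))
      simp [hx', min_eq_left this]
    have h2 : Tendsto (fun j => f (x (φ j))) atTop (𝓝 (f a)) :=
      (hf.continuousAt).tendsto.comp hxconv
    have h3 : Tendsto (fun j => f (x (φ j))) atTop (𝓝 y) := by
      have := hU.tendsto (fun n => hxU n)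
      exact this.comp hφ.tendsto_atTop
    exact ⟨a, haE, tendsto_nhds_unique h2 h3⟩
  -- measure bound
  have hmeas : Tendsto (fun n => ν (closure (f '' E K n))) atTop
      (𝓝 (ν (⋂ n, closure (f '' E K n)))) := by
    have := tendsto_measure_iInter_atTop (μ := ν)
      (s := fun n => closure (f '' E K n))
      (fun n => isClosed_closure.measurableSet.nullMeasurableSet) ?_ ⟨0, measure_ne_top ν _⟩
    · exact this
    · intro n m hnm
      apply closure_mono
      apply Set.image_mono
      intro x hx i hi
      exact hx i (lt_of_lt_of_le hi hnm)
  have hge : r ≤ ν (⋂ n, closure (f '' E K n)) := by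
    refine ge_of_tendsto hmeas ?_
    filter_upwards with n
    exact le_trans (hInv n).le (measure_mono subset_closure)
  exact le_trans hge (measure_mono hinter)


theorem analytic_squeeze {X : Type*} [TopologicalSpace X] [T2Space X] [FirstCountableTopology X]
    [MeasurableSpace X] [BorelSpace X] {S : Set X}
    (hS : MeasureTheory.AnalyticSet S) (ν : Measure X) [IsFiniteMeasure ν] :
    ∃ B₁ B₂ : Set X, MeasurableSet B₁ ∧ MeasurableSet B₂ ∧ B₁ ⊆ S ∧ S ⊆ B₂ ∧
      ν (B₂ \ B₁) = 0 := by
  classical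
  obtain ⟨B₂, hSB₂, hB₂, hνB₂⟩ := exists_measurable_superset ν S
  rw [MeasureTheory.AnalyticSet] at hS
  rcases hS with rfl | ⟨f, hf, rfl⟩
  · exact ⟨∅, ∅, .empty, .empty, subset_rfl, by simp, by simp⟩
  have key : ∀ r : ℝ≥0∞, r < ν (Set.range f) →
      ∃ K, MeasurableSet K ∧ K ⊆ Set.range f ∧ r ≤ ν K :=
    fun r hr => analytic_inner hf ν hr
  set B₁ : Set X := ⋃ n : ℕ,
    if h : (ν (Set.range f) - ((n : ℝ≥0∞))⁻¹) < ν (Set.range f) then (key _ h).choose else ∅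
    with hB₁def
  have hB₁m : MeasurableSet B₁ := MeasurableSet.iUnion fun n => by
    split_ifs with h
    exacts [(key _ h).choose_spec.1, MeasurableSet.empty]
  have hB₁S : B₁ ⊆ Set.range f := Set.iUnion_subset fun n => by
    split_ifs with h
    exacts [(key _ h).choose_spec.2.1, Set.empty_subset _]
  have hB₁ν : ν (Set.range f) ≤ ν B₁ := by
    by_contra hlt
    push_neg at hlt
    obtain ⟨r, hr1, hr2⟩ := exists_between hlt
    have hpos : (0 : ℝ≥0∞) < ν (Set.range f) - r := tsub_pos_of_lt hr2
    obtain ⟨n, hn⟩ := ENNReal.exists_inv_nat_lt hpos.ne'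
    have hcond : (ν (Set.range f) - ((n : ℝ≥0∞))⁻¹) < ν (Set.range f) :=
      ENNReal.sub_lt_self (measure_ne_top ν _)
        (ne_of_gt (lt_of_le_of_lt (zero_le : (0 : ℝ≥0∞) ≤ r) hr2))
        (ENNReal.inv_ne_zero.mpr (ENNReal.natCast_ne_top n))
    have hrle : r ≤ ν (Set.range f) - ((n : ℝ≥0∞))⁻¹ := by
      have h3 : ν (Set.range f) - (ν (Set.range f) - r) ≤ ν (Set.range f) - ((n : ℝ≥0∞))⁻¹ :=
        tsub_le_tsub_left hn.le _
      rwa [ENNReal.sub_sub_cancel (measure_ne_top ν _) hr2.le] at h3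
    have hKsub : (key _ hcond).choose ⊆ B₁ := by
      rw [hB₁def]
      refine Set.subset_iUnion_of_subset n ?_
      rw [dif_pos hcond]
    have : r ≤ ν B₁ :=
      le_trans (le_trans hrle (key _ hcond).choose_spec.2.2) (measure_mono hKsub)
    exact absurd hr1 (not_lt.mpr this)
  refine ⟨B₁, B₂, hB₁m, hB₂, hB₁S, hSB₂, ?_⟩
  have h1 : ν B₁ = ν (Set.range f) := le_antisymm (measure_mono hB₁S) hB₁ν
  rw [measure_diff (hB₁S.trans hSB₂) hB₁m.nullMeasurableSet (measure_ne_top ν B₁), hνB₂, h1,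
    tsub_self]

theorem measurableSet_exists_of_complete {Ω Y : Type*} [m0 : MeasurableSpace Ω]
    (μ : Measure Ω) [IsFiniteMeasure μ]
    [TopologicalSpace Y] [PolishSpace Y] [mY : MeasurableSpace Y] [BorelSpace Y]
    (G : MeasurableSpace Ω) (hle : G ≤ m0) (hnull : ∀ s : Set Ω, μ s = 0 → MeasurableSet[G] s)
    {A : Set (Ω × Y)} (hA : MeasurableSet[G.prod inferInstance] A) :
    MeasurableSet[G] {ω | ∃ y, (ω, y) ∈ A} := by
  obtain ⟨φ, B, hφ, hB, rfl⟩ := exists_factorization G hA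
  have hφ0 : Measurable[m0] φ := Measurable.mono (mb' := inferInstance) hφ hle le_rfl
  set ν : Measure (ℕ → Bool) := @Measure.map Ω (ℕ → Bool) m0 _ φ μ with hν
  haveI : IsFiniteMeasure ν := by
    constructor
    rw [hν, @Measure.map_apply Ω (ℕ → Bool) m0 _ μ φ hφ0 _ MeasurableSet.univ]
    exact measure_lt_top μ _
  haveI : PolishSpace ((ℕ → Bool) × Y) := {}
  have hanal : MeasureTheory.AnalyticSet (Prod.fst '' B) :=
    (hB.analyticSet).image_of_continuous continuous_fst
  obtain ⟨B₁, B₂, hB₁, hB₂, hB₁S, hSB₂, hdiff⟩ :=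
    analytic_squeeze hanal ν
  have hseteq : {ω | ∃ y, (ω, y) ∈ (fun p : Ω × Y => (φ p.1, p.2)) ⁻¹' B}
      = φ ⁻¹' (Prod.fst '' B) := by
    ext ω
    constructor
    · rintro ⟨y, hy⟩
      exact ⟨(φ ω, y), hy, rfl⟩
    · rintro ⟨p, hp, hfst⟩
      refine ⟨p.2, ?_⟩
      simp only [Set.mem_preimage]
      rwa [show (φ ω, p.2) = p from Prod.ext hfst.symm rfl]
  rw [hseteq]
  have hcover : φ ⁻¹' (Prod.fst '' B) = φ ⁻¹' B₁ ∪ (φ ⁻¹' (Prod.fst '' B) \ φ ⁻¹' B₁) :=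
    (Set.union_diff_cancel (Set.preimage_mono hB₁S)).symm
  rw [hcover]
  refine (hφ hB₁).union (hnull _ ?_)
  refine measure_mono_null ?_ (?_ : μ (φ ⁻¹' (B₂ \ B₁)) = 0)
  · intro ω hω
    exact ⟨hSB₂ hω.1, hω.2⟩
  · rw [← @Measure.map_apply Ω (ℕ → Bool) m0 _ μ φ hφ0 _ (hB₂.diff hB₁)]
    exact hdiff

theorem exists_measurable_selection {Ω Y : Type*} [MetricSpace Y] [CompleteSpace Y]
    [SecondCountableTopology Y] [Nonempty Y] [MeasurableSpace Y] [BorelSpace Y]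
    (G : MeasurableSpace Ω) {A : Set (Ω × Y)}
    (hclosed : ∀ ω, IsClosed {y | (ω, y) ∈ A})
    (hne : ∀ ω, ∃ y, (ω, y) ∈ A)
    (hopen : ∀ U : Set Y, IsOpen U → MeasurableSet[G] {ω | ∃ y ∈ U, (ω, y) ∈ A}) :
    ∃ v : Ω → Y, Measurable[G] v ∧ ∀ ω, (ω, v ω) ∈ A := by
  classical
  obtain ⟨q, hq⟩ := TopologicalSpace.exists_dense_seq Y
  have hGSm : ∀ (j : ℕ) (ε : ℝ), MeasurableSet[G] {ω | ∃ y ∈ Metric.ball (q j) ε, (ω, y) ∈ A} :=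
    fun j ε => hopen _ Metric.isOpen_ball
  -- base function
  have hbase : ∀ ω, ∃ j, ω ∈ {ω | ∃ y ∈ Metric.ball (q j) ((1/2 : ℝ) ^ 0), (ω, y) ∈ A} := by
    intro ω
    obtain ⟨y, hy⟩ := hne ω
    obtain ⟨j, hj⟩ := hq.exists_dist_lt y (by norm_num : (0:ℝ) < (1/2 : ℝ) ^ 0)
    exact ⟨j, ⟨y, Metric.mem_ball.mpr hj, hy⟩⟩
  have hbasemeas : Measurable[G] fun ω => q (Nat.find (hbase ω)) := by
    refine Measurable.comp (measurable_from_top) ?_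
    refine measurable_to_countable' fun c => ?_
    have : (fun ω => Nat.find (hbase ω)) ⁻¹' {c} =
        {ω | ∃ y ∈ Metric.ball (q c) ((1/2 : ℝ) ^ 0), (ω, y) ∈ A} ∩
        ⋂ i < c, {ω | ∃ y ∈ Metric.ball (q i) ((1/2 : ℝ) ^ 0), (ω, y) ∈ A}ᶜ := by
      ext ω
      simp only [Set.mem_preimage, Set.mem_singleton_iff, Nat.find_eq_iff, Set.mem_inter_iff,
        Set.mem_iInter, Set.mem_compl_iff]
    rw [this]
    exact (hGSm c _).inter (MeasurableSet.iInter fun i => MeasurableSet.iInter fun _ =>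
      (hGSm i _).compl)
  have hbaseinv : ∀ ω, ∃ y, (ω, y) ∈ A ∧ dist y (q (Nat.find (hbase ω))) < (1/2 : ℝ) ^ 0 := by
    intro ω
    obtain ⟨y, hy1, hy2⟩ := Nat.find_spec (hbase ω)
    exact ⟨y, hy2, Metric.mem_ball.mp hy1⟩
  -- the step
  have step : ∀ (s : ℕ) (w : Ω → Y), Measurable[G] w →
      (∀ ω, ∃ y, (ω, y) ∈ A ∧ dist y (w ω) < (1/2 : ℝ) ^ s) →
      ∃ w' : Ω → Y, Measurable[G] w' ∧
        (∀ ω, ∃ y, (ω, y) ∈ A ∧ dist y (w' ω) < (1/2 : ℝ) ^ (s+1)) ∧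
        ∀ ω, dist (w' ω) (w ω) < (1/2 : ℝ) ^ s + (1/2 : ℝ) ^ (s+1) := by
    intro s w hwm hwinv
    have hex : ∀ ω, ∃ j, (ω ∈ {ω | ∃ y ∈ Metric.ball (q j) ((1/2 : ℝ) ^ (s+1)), (ω, y) ∈ A}) ∧
        dist (q j) (w ω) < (1/2 : ℝ) ^ s + (1/2 : ℝ) ^ (s+1) := by
      intro ω
      obtain ⟨y, hy, hyd⟩ := hwinv ω
      obtain ⟨j, hj⟩ := hq.exists_dist_lt y (by positivity : (0:ℝ) < (1/2 : ℝ) ^ (s+1))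
      refine ⟨j, ⟨y, Metric.mem_ball.mpr hj, hy⟩, ?_⟩
      calc dist (q j) (w ω) ≤ dist (q j) y + dist y (w ω) := dist_triangle _ _ _
        _ < (1/2 : ℝ) ^ (s+1) + (1/2 : ℝ) ^ s := by
            rw [dist_comm (q j) y]; exact add_lt_add hj hyd
        _ = (1/2 : ℝ) ^ s + (1/2 : ℝ) ^ (s+1) := add_comm _ _
    refine ⟨fun ω => q (Nat.find (hex ω)), ?_, ?_, ?_⟩
    · refine Measurable.comp (measurable_from_top) ?_
      refine measurable_to_countable' fun c => ?_
      have : (fun ω => Nat.find (hex ω)) ⁻¹' {c} =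
          ({ω | ∃ y ∈ Metric.ball (q c) ((1/2 : ℝ) ^ (s+1)), (ω, y) ∈ A} ∩
            w ⁻¹' (Metric.ball (q c) ((1/2 : ℝ) ^ s + (1/2 : ℝ) ^ (s+1)))) ∩
          ⋂ i < c, (({ω | ∃ y ∈ Metric.ball (q i) ((1/2 : ℝ) ^ (s+1)), (ω, y) ∈ A} ∩
            w ⁻¹' (Metric.ball (q i) ((1/2 : ℝ) ^ s + (1/2 : ℝ) ^ (s+1)))))ᶜ := by
        ext ω
        simp only [Set.mem_preimage, Set.mem_singleton_iff, Nat.find_eq_iff, Set.mem_inter_iff,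
          Set.mem_iInter, Set.mem_compl_iff, Metric.mem_ball, dist_comm (w ω)]
      rw [this]
      have hball : ∀ (c : ℕ) (r : ℝ), MeasurableSet[G] (w ⁻¹' Metric.ball (q c) r) :=
        fun c r => hwm (Metric.isOpen_ball.measurableSet)
      exact ((hGSm c _).inter (hball c _)).inter
        (MeasurableSet.iInter fun i => MeasurableSet.iInter fun _ =>
          ((hGSm i _).inter (hball i _)).compl)
    · intro ω
      obtain ⟨⟨y, hy1, hy2⟩, _⟩ := Nat.find_spec (hex ω)
      exact ⟨y, hy2, Metric.mem_ball.mp hy1⟩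
    · intro ω
      have := (Nat.find_spec (hex ω)).2
      rwa [show dist (q (Nat.find (hex ω))) (w ω)
        = dist ((fun ω => q (Nat.find (hex ω))) ω) (w ω) from rfl] at this
  -- recursive sequence
  let seq : (s : ℕ) → {w : Ω → Y // Measurable[G] w ∧
      ∀ ω, ∃ y, (ω, y) ∈ A ∧ dist y (w ω) < (1/2 : ℝ) ^ s} :=
    Nat.rec ⟨fun ω => q (Nat.find (hbase ω)), hbasemeas, hbaseinv⟩
      (fun s p => ⟨(step s p.1 p.2.1 p.2.2).choose, (step s p.1 p.2.1 p.2.2).choose_spec.1,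
        (step s p.1 p.2.1 p.2.2).choose_spec.2.1⟩)
  have hdist : ∀ (s : ℕ) (ω : Ω), dist ((seq (s+1)).1 ω) ((seq s).1 ω) <
      (1/2 : ℝ) ^ s + (1/2 : ℝ) ^ (s+1) :=
    fun s => (step s (seq s).1 (seq s).2.1 (seq s).2.2).choose_spec.2.2
  have hcauchy : ∀ ω, CauchySeq (fun s => (seq s).1 ω) := by
    intro ω
    refine cauchySeq_of_le_geometric (1/2 : ℝ) 2 (by norm_num) fun s => ?_
    have h1 := hdist s ω
    rw [dist_comm] at h1
    have : (1/2 : ℝ) ^ s + (1/2 : ℝ) ^ (s+1) ≤ 2 * (1/2 : ℝ) ^ s := by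
      rw [pow_succ]
      nlinarith [pow_pos (by norm_num : (0:ℝ) < 1/2) s]
    linarith
  have hlim : ∀ ω, ∃ a, Tendsto (fun s => (seq s).1 ω) atTop (𝓝 a) :=
    fun ω => cauchySeq_tendsto_of_complete (hcauchy ω)
  choose v hv using hlim
  have hvm : Measurable[G] v :=
    measurable_of_tendsto_metrizable (fun s => (seq s).2.1) (tendsto_pi_nhds.mpr hv)
  refine ⟨v, hvm, ?_⟩
  intro ω
  have : v ω ∈ closure {y | (ω, y) ∈ A} := by
    rw [Metric.mem_closure_iff]
    intro ε hε
    obtain ⟨s₀, hs₀⟩ := exists_pow_lt_of_lt_one (by positivity : (0:ℝ) < ε/2)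
      (by norm_num : (1/2 : ℝ) < 1)
    obtain ⟨N, hN⟩ := Metric.tendsto_atTop.mp (hv ω) (ε/2) (by positivity)
    set s := max s₀ N with hs
    obtain ⟨y, hy1, hy2⟩ := (seq s).2.2 ω
    refine ⟨y, hy1, ?_⟩
    have hpow : (1/2 : ℝ) ^ s ≤ (1/2 : ℝ) ^ s₀ :=
      pow_le_pow_of_le_one (by norm_num) (by norm_num) (le_max_left _ _)
    have hd1 : dist ((seq s).1 ω) (v ω) < ε/2 := hN s (le_max_right _ _)
    calc dist (v ω) y ≤ dist (v ω) ((seq s).1 ω) + dist ((seq s).1 ω) y := dist_triangle _ _ _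
      _ < ε/2 + ε/2 := by
          rw [dist_comm (v ω), dist_comm ((seq s).1 ω) y]
          exact add_lt_add hd1 (lt_of_lt_of_le hy2 (hpow.trans hs₀.le))
      _ = ε := by ring
  rwa [(hclosed ω).closure_eq] at this

end SelectionMachinery

/-- **Lemma 2**: for every `t ∈ {1, …, N}` and every `u ∈ 𝒰_t` there exists
`v ∈ 𝒱_t = 𝒳_t` such that `(u, v) ∈ 𝒲_t`, i.e. `(u(ω), v(ω)) ∈ Z_t(ω)` a.s. -/
theorem exists_successor_state
    {Ω : Type*} [m0 : MeasurableSpace Ω] {μ : MeasureTheory.Measure Ω}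
    [MeasureTheory.IsProbabilityMeasure μ]
    {N : ℕ} {m : ℕ → ℕ} (S : VNG Ω μ N m)
    (hA2 : S.A2) (hA3 : S.A3)
    (t : ℕ) (ht1 : 1 ≤ t) (htN : t ≤ N)
    (u : Ω → Fin (m (t - 1)) → ℝ)
    (hu_mem : MemLinf μ (S.F t) u)
    (hu_X : ∀ᵐ ω ∂μ, u ω ∈ S.X (t - 1) ω) :
    ∃ v : Ω → Fin (m t) → ℝ,
      MemLinf μ (S.F t) v ∧ (∀ᵐ ω ∂μ, v ω ∈ S.X t ω) ∧
      ∀ᵐ ω ∂μ, (u ω, v ω) ∈ S.Z t ω := by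
  classical
  obtain ⟨humeas, C, hC⟩ := hu_mem
  obtain ⟨K, hK⟩ := hA3
  set A : Set (Ω × (Fin (m t) → ℝ)) := {p | (u p.1, p.2) ∈ S.Z t p.1} with hAdef
  have hAmeas : MeasurableSet[(S.F t).prod inferInstance] A := by
    have hfst : @Measurable (Ω × (Fin (m t) → ℝ)) Ω ((S.F t).prod inferInstance) (S.F t)
        Prod.fst := @measurable_fst Ω (Fin (m t) → ℝ) (S.F t) _
    have hsnd : @Measurable (Ω × (Fin (m t) → ℝ)) (Fin (m t) → ℝ)
        ((S.F t).prod inferInstance) _ Prod.snd := @measurable_snd Ω (Fin (m t) → ℝ) (S.F t) _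
    have hmap : @Measurable (Ω × (Fin (m t) → ℝ))
        (Ω × ((Fin (m (t - 1)) → ℝ) × (Fin (m t) → ℝ)))
        ((S.F t).prod inferInstance) ((S.F t).prod inferInstance)
        (fun p => (p.1, (u p.1, p.2))) := by
      exact hfst.prodMk ((humeas.comp hfst).prodMk hsnd)
    exact hmap (S.Z_meas t ht1 htN)
  have hnull : ∀ s : Set Ω, μ s = 0 → MeasurableSet[S.F t] s := fun s hs => S.F_null t s hs
  set Ω₀ : Set Ω := {ω | ∃ y, (ω, y) ∈ A} with hΩ₀def
  have hΩ₀meas : MeasurableSet[S.F t] Ω₀ :=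
    measurableSet_exists_of_complete μ (S.F t) (S.F_le t) hnull hAmeas
  set A' : Set (Ω × (Fin (m t) → ℝ)) := A ∪ {p | p.1 ∈ Ω₀ᶜ} with hA'def
  have hA'meas : MeasurableSet[(S.F t).prod inferInstance] A' := by
    refine hAmeas.union ?_
    exact measurable_fst hΩ₀meas.compl
  have hclosed : ∀ ω, IsClosed {y | (ω, y) ∈ A'} := by
    intro ω
    by_cases hω : ω ∈ Ω₀
    · have : {y | (ω, y) ∈ A'} = {y : Fin (m t) → ℝ | (u ω, y) ∈ S.Z t ω} := by
        ext y
        simp only [hA'def, Set.mem_union, Set.mem_setOf_eq, Set.mem_compl_iff]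
        constructor
        · rintro (h | h)
          · exact h
          · exact absurd hω h
        · exact Or.inl
      rw [this]
      exact (S.Z_closed t ht1 htN ω).preimage (Continuous.prodMk_right (u ω))
    · have : {y | (ω, y) ∈ A'} = Set.univ := by
        ext y
        simp only [hA'def, Set.mem_union, Set.mem_setOf_eq, Set.mem_compl_iff, Set.mem_univ,
          iff_true]
        exact Or.inr hω
      rw [this]
      exact isClosed_univ
  have hne : ∀ ω, ∃ y, (ω, y) ∈ A' := by
    intro ω
    by_cases hω : ω ∈ Ω₀
    · obtain ⟨y, hy⟩ := hω
      exact ⟨y, Or.inl hy⟩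
    · exact ⟨0, Or.inr hω⟩
  have hopen : ∀ U : Set (Fin (m t) → ℝ), IsOpen U →
      MeasurableSet[S.F t] {ω | ∃ y ∈ U, (ω, y) ∈ A'} := by
    intro U hU
    have heq : {ω | ∃ y ∈ U, (ω, y) ∈ A'} = {ω | ∃ y, (ω, y) ∈ A' ∩ {p | p.2 ∈ U}} := by
      ext ω
      constructor
      · rintro ⟨y, hyU, hyA⟩; exact ⟨y, hyA, hyU⟩
      · rintro ⟨y, hyA, hyU⟩; exact ⟨y, hyU, hyA⟩
    rw [heq]
    refine measurableSet_exists_of_complete μ (S.F t) (S.F_le t) hnull ?_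
    exact hA'meas.inter (measurable_snd hU.measurableSet)
  obtain ⟨v, hvmeas, hvA⟩ := exists_measurable_selection (S.F t) hclosed hne hopen
  have hΩ₀ae : ∀ᵐ ω ∂μ, ω ∈ Ω₀ := by
    filter_upwards [hu_X] with ω hω
    have hproj := S.Z_proj t ht1 htN ω
    rw [← hproj] at hω
    obtain ⟨p, hp, hfst⟩ := hω
    refine ⟨p.2, ?_⟩
    show (u ω, p.2) ∈ S.Z t ω
    rwa [show (u ω, p.2) = p from Prod.ext hfst.symm rfl]
  have hZae : ∀ᵐ ω ∂μ, (u ω, v ω) ∈ S.Z t ω := by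
    filter_upwards [hΩ₀ae] with ω hω
    rcases hvA ω with h | h
    · exact h
    · exact absurd hω h
  have hl1 : ∀ a : Fin (m t) → ℝ, 0 ≤ l1 a := by
    intro a
    exact Finset.sum_nonneg fun i _ => abs_nonneg _
  refine ⟨v, ⟨hvmeas, max (K t) 0 * max C 0, ?_⟩, ?_, hZae⟩
  · filter_upwards [hZae, hC] with ω hZ hCu
    have hbd := hK t ht1 htN ω (u ω, v ω) hZ
    have h1 : 0 ≤ l1 (u ω) := Finset.sum_nonneg fun i _ => abs_nonneg _
    calc l1 (v ω) ≤ K t * l1 (u ω) := hbd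
      _ ≤ max (K t) 0 * l1 (u ω) := mul_le_mul_of_nonneg_right (le_max_left _ _) h1
      _ ≤ max (K t) 0 * max C 0 :=
          mul_le_mul_of_nonneg_left (hCu.trans (le_max_left _ _)) (le_max_right _ _)
  · filter_upwards [hZae] with ω hZ
    exact (S.Z_sub t ht1 htN ω hZ).2
end
end

section
/- Let ζ = (v_0, u_1, v_1, …, u_N, v_N, u_{N+1}) ∈ 𝒲 satisfy v_{t−1} − u_t ∈ 𝒰_t for t = 1,…,N+1. Then there is a path (y_0, …, y_N) such that y_0 = v_0 and y_t − v_t ∈ 𝒳_t for t = 0, 1, …, N. -/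
open MeasureTheory

noncomputable section

section AuxSelection
open Filter Topology Set

theorem my_tsum_half (ε : ENNReal) : ∑' i : ℕ, ε / 2 ^ (i + 1) = ε := by
  have h : ∀ i : ℕ, ε / 2 ^ (i + 1) = ε * (2⁻¹) ^ (i+1) := by
    intro i
    rw [div_eq_mul_inv, ← ENNReal.inv_pow]
  simp_rw [h, pow_succ]
  rw [ENNReal.tsum_mul_left]
  rw [show (∑' i : ℕ, (2⁻¹:ENNReal) ^ i * 2⁻¹) = (∑' i : ℕ, (2⁻¹:ENNReal) ^ i) * 2⁻¹ from
    ENNReal.tsum_mul_right, ENNReal.tsum_geometric]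
  rw [ENNReal.one_sub_inv_two, inv_inv]
  have h2 : (2 : ENNReal) * 2⁻¹ = 1 := ENNReal.mul_inv_cancel (by norm_num) (by norm_num)
  rw [h2, mul_one]

theorem analyticSet_inner_compact {X : Type*} [TopologicalSpace X] [PolishSpace X]
    [MeasurableSpace X] [BorelSpace X] (ν : Measure X) [IsFiniteMeasure ν]
    {A : Set X} (hA : AnalyticSet A) {ε : ENNReal} (hε : 0 < ε) :
    ∃ K : Set X, IsCompact K ∧ K ⊆ A ∧ ν A ≤ ν K + ε := by
  rw [AnalyticSet] at hA
  rcases hA with h | ⟨f, hf, rfl⟩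
  · exact ⟨∅, isCompact_empty, by simp [h], by simp [h]⟩
  letI := TopologicalSpace.upgradeIsCompletelyMetrizable X
  -- step choice
  have step : ∀ (k : ℕ) (s : Set (ℕ → ℕ)),
      ∃ j : ℕ, ν (f '' s) ≤ ν (f '' (s ∩ {σ | σ k ≤ j})) + ε / 2 ^ (k + 1) := by
    intro k s
    have hmono : Monotone (fun j : ℕ => f '' (s ∩ {σ | σ k ≤ j})) := by
      intro i j hij
      exact image_mono (inter_subset_inter_right _ (fun σ hσ => le_trans hσ hij))
    have hU : (⋃ j : ℕ, f '' (s ∩ {σ | σ k ≤ j})) = f '' s := by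
      rw [← image_iUnion, ← inter_iUnion]
      congr 1
      rw [inter_eq_self_of_subset_left]
      intro σ _
      exact mem_iUnion.2 ⟨σ k, show σ k ≤ σ k from le_rfl⟩
    have hsup : ν (f '' s) = ⨆ j, ν (f '' (s ∩ {σ | σ k ≤ j})) := by
      rw [← hU]; exact hmono.measure_iUnion
    by_cases h0 : ν (f '' s) = 0
    · exact ⟨0, by simp [h0]⟩
    have hlt : ν (f '' s) - ε / 2 ^ (k+1) < ν (f '' s) := by
      apply ENNReal.sub_lt_self (measure_ne_top _ _) h0
      simp [hε.ne', ENNReal.div_eq_top]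
    rw [hsup] at hlt
    rcases lt_iSup_iff.1 hlt with ⟨j, hj⟩
    refine ⟨j, ?_⟩
    rw [← hsup] at hj
    exact tsub_le_iff_right.1 hj.le
  -- recursively defined decreasing sets
  classical
  let S : ℕ → Set (ℕ → ℕ) := fun k =>
    Nat.rec univ (fun k s => s ∩ {σ | σ k ≤ Classical.choose (step k s)}) k
  let n : ℕ → ℕ := fun k => Classical.choose (step k (S k))
  have hSsucc : ∀ k, S (k + 1) = S k ∩ {σ | σ k ≤ n k} := fun k => rfl
  have hbound : ∀ k, ν (f '' S k) ≤ ν (f '' S (k + 1)) + ε / 2 ^ (k + 1) := fun k =>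
    Classical.choose_spec (step k (S k))
  have hanti : Antitone S := by
    apply antitone_nat_of_succ_le
    intro k
    rw [hSsucc]
    exact inter_subset_left
  have hSle : ∀ k, S k ⊆ {σ | ∀ i < k, σ i ≤ n i} := by
    intro k
    induction k with
    | zero => intro σ _ i hi; omega
    | succ k ih =>
      rw [hSsucc]
      rintro σ ⟨h1, h2⟩ i hi
      rcases Nat.lt_succ_iff_lt_or_eq.1 hi with h | rfl
      · exact ih h1 i h
      · exact h2
  have hSge : ∀ k, {σ : ℕ → ℕ | ∀ i, σ i ≤ n i} ⊆ S k := by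
    intro k
    induction k with
    | zero => intro σ _; trivial
    | succ k ih =>
      rw [hSsucc]
      exact fun σ hσ => ⟨ih hσ, hσ k⟩
  -- cumulative bound
  have hcum : ∀ k, ν (f '' S 0) ≤ ν (f '' S k) + ∑ i ∈ Finset.range k, ε / 2 ^ (i + 1) := by
    intro k
    induction k with
    | zero => simp
    | succ k ih =>
      calc ν (f '' S 0) ≤ ν (f '' S k) + ∑ i ∈ Finset.range k, ε / 2 ^ (i + 1) := ih
        _ ≤ (ν (f '' S (k + 1)) + ε / 2 ^ (k + 1)) + ∑ i ∈ Finset.range k, ε / 2 ^ (i + 1) :=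
            add_le_add_left (hbound k) _
        _ = ν (f '' S (k + 1)) + ∑ i ∈ Finset.range (k + 1), ε / 2 ^ (i + 1) := by
            rw [Finset.sum_range_succ]; ring
  have hcum' : ∀ k, ν (f '' S 0) ≤ ν (f '' S k) + ε := by
    intro k
    refine le_trans (hcum k) (add_le_add_right ?_ _)
    calc ∑ i ∈ Finset.range k, ε / 2 ^ (i + 1) ≤ ∑' i : ℕ, ε / 2 ^ (i + 1) :=
          ENNReal.sum_le_tsum _
      _ = ε := my_tsum_half ε
  -- the compact box
  set Box : Set (ℕ → ℕ) := {σ | ∀ i, σ i ≤ n i} with hBoxdef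
  have hBoxc : IsCompact Box := by
    have : Box = univ.pi (fun i => Set.Iic (n i)) := by
      ext σ; simp [hBoxdef, Set.mem_pi, Pi.le_def]
    rw [this]
    exact isCompact_univ_pi (fun i => (Set.finite_Iic (n i)).isCompact)
  refine ⟨f '' Box, hBoxc.image hf, by rw [← image_univ]; exact image_mono (subset_univ _), ?_⟩
  -- closed envelope
  have hclosedmeas : ∀ k, NullMeasurableSet (closure (f '' S k)) ν :=
    fun k => (isClosed_closure.measurableSet).nullMeasurableSet
  have hacl : Antitone fun k => closure (f '' S k) :=
    fun i j hij => closure_mono (image_mono (hanti hij))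
  have hiInter : ν (⋂ k, closure (f '' S k)) = ⨅ k, ν (closure (f '' S k)) :=
    hacl.measure_iInter hclosedmeas ⟨0, measure_ne_top _ _⟩
  -- key inclusion
  have hincl : (⋂ k, closure (f '' S k)) ⊆ f '' Box := by
    intro x hx
    have hchoice : ∀ k : ℕ, ∃ σ ∈ S k, dist x (f σ) < 1 / (k + 1) := by
      intro k
      have hxk : x ∈ closure (f '' S k) := mem_iInter.1 hx k
      rcases Metric.mem_closure_iff.1 hxk (1 / (k + 1)) (by positivity) with ⟨b, ⟨σ, hσ, rfl⟩, hd⟩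
      exact ⟨σ, hσ, hd⟩
    choose σs hσs hdist using hchoice
    -- truncation
    set z : ℕ → (ℕ → ℕ) := fun k i => min (σs k i) (n i) with hzdef
    have hz : ∀ k, z k ∈ Box := fun k i => min_le_right _ _
    set U : Ultrafilter ℕ := hyperfilter ℕ with hU
    have hUcof : (U : Filter ℕ) ≤ atTop := by
      rw [← Nat.cofinite_eq_atTop]; exact hyperfilter_le_cofinite
    obtain ⟨zl, hzl, hzlim⟩ :=
      hBoxc.ultrafilter_le_nhds (U.map z) (by
        rw [Ultrafilter.coe_map]
        exact le_principal_iff.2 (Filter.mem_map.2 (Filter.Eventually.of_forall hz)))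
    -- σs k → zl along U
    have hteq : ∀ i, ∀ᶠ k in (U : Filter ℕ), σs k i = z k i := by
      intro i
      apply Filter.Eventually.filter_mono hUcof
      filter_upwards [Filter.eventually_gt_atTop i] with k hk
      have := hSle k (hσs k) i hk
      simp [hzdef, min_eq_left this]
    have hσtend : Tendsto (fun k => σs k) (U : Filter ℕ) (𝓝 zl) := by
      rw [tendsto_pi_nhds]
      intro i
      have hzt0 : Tendsto z (U : Filter ℕ) (𝓝 zl) := by
        rw [Filter.Tendsto, ← Ultrafilter.coe_map]; exact hzlim
      have hzt : Tendsto (fun k => z k i) (U : Filter ℕ) (𝓝 (zl i)) := tendsto_pi_nhds.1 hzt0 i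
      exact hzt.congr' ((hteq i).mono (fun k hk => hk.symm))
    have h1 : Tendsto (fun k => f (σs k)) (U : Filter ℕ) (𝓝 (f zl)) :=
      (hf.tendsto zl).comp hσtend
    have h2 : Tendsto (fun k => f (σs k)) (U : Filter ℕ) (𝓝 x) := by
      have ht : Tendsto (fun k => f (σs k)) atTop (𝓝 x) := by
        rw [tendsto_iff_dist_tendsto_zero]
        refine squeeze_zero (fun k => dist_nonneg) (fun k => ?_)
          tendsto_one_div_add_atTop_nhds_zero_nat
        rw [dist_comm]
        exact (hdist k).le
      exact ht.mono_left hUcof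
    exact ⟨zl, hzl, tendsto_nhds_unique h1 h2⟩
  have hstart : ν (range f) = ν (f '' S 0) := by
    rw [show S 0 = univ from rfl, image_univ]
  have hk : ∀ k, ν (f '' S 0) ≤ ν (closure (f '' S k)) + ε := fun k =>
    le_trans (hcum' k) (add_le_add_left (measure_mono subset_closure) _)
  have h3 : ν (f '' S 0) ≤ (⨅ k, ν (closure (f '' S k))) + ε := by
    rw [ENNReal.iInf_add]
    exact le_iInf (fun k => hk k)
  rw [hstart]
  refine le_trans h3 (add_le_add_left ?_ _)
  rw [← hiInter]
  exact measure_mono hincl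


theorem analyticSet_sandwich {X : Type*} [TopologicalSpace X] [PolishSpace X] [T2Space X]
    [MeasurableSpace X] [BorelSpace X] (ν : Measure X) [IsFiniteMeasure ν]
    {A : Set X} (hA : AnalyticSet A) :
    ∃ B₁ B₂ : Set X, MeasurableSet B₁ ∧ MeasurableSet B₂ ∧ B₁ ⊆ A ∧ A ⊆ B₂ ∧
      ν (B₂ \ B₁) = 0 := by
  have hK : ∀ n : ℕ, ∃ K : Set X, IsCompact K ∧ K ⊆ A ∧ ν A ≤ ν K + ((n : ENNReal) + 1)⁻¹ :=
    fun n => analyticSet_inner_compact ν hA (by simp)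
  choose K hKc hKA hKb using hK
  refine ⟨⋃ n, K n, toMeasurable ν A, MeasurableSet.iUnion (fun n => ((hKc n).isClosed).measurableSet),
    measurableSet_toMeasurable ν A, iUnion_subset hKA,
    subset_toMeasurable ν A, ?_⟩
  have hB1A : ν (⋃ n, K n) ≤ ν A := measure_mono (iUnion_subset hKA)
  have hAB1 : ν A ≤ ν (⋃ n, K n) := by
    refine ENNReal.le_of_forall_pos_le_add (fun ε hε _ => ?_)
    obtain ⟨n, hn⟩ := ENNReal.exists_inv_nat_lt (show (ε : ENNReal) ≠ 0 by
      simpa using hε.ne')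
    calc ν A ≤ ν (K n) + ((n : ENNReal) + 1)⁻¹ := hKb n
      _ ≤ ν (⋃ m, K m) + ε := by
          refine add_le_add (measure_mono (subset_iUnion K n)) ?_
          refine le_trans ?_ hn.le
          exact ENNReal.inv_le_inv.2 (by simp)
  have heq : ν (⋃ n, K n) = ν A := le_antisymm hB1A hAB1
  rw [measure_diff (iUnion_subset (fun n => (hKA n).trans (subset_toMeasurable ν A)))
      ((MeasurableSet.iUnion (fun n => ((hKc n).isClosed).measurableSet)).nullMeasurableSet)
      (measure_ne_top _ _), measure_toMeasurable, heq, tsub_self]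

/-- Every product-measurable set over an abstract measurable space factors through
a measurable map to `ℕ → ℝ`. -/
theorem exists_factorization_s8 {Ω : Type*} {F : MeasurableSpace Ω} {k : ℕ}
    {G : Set (Ω × (Fin k → ℝ))} (hG : MeasurableSet[F.prod inferInstance] G) :
    ∃ Φ : Ω → (ℕ → ℝ), Measurable[F] Φ ∧
      ∃ Gh : Set ((ℕ → ℝ) × (Fin k → ℝ)), MeasurableSet Gh ∧ G = (Prod.map Φ id) ⁻¹' Gh := by
  classical
  set P : Set (Ω × (Fin k → ℝ)) → Prop := fun s =>
    ∃ Φ : Ω → (ℕ → ℝ), Measurable[F] Φ ∧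
      ∃ Gh : Set ((ℕ → ℝ) × (Fin k → ℝ)), MeasurableSet Gh ∧ s = (Prod.map Φ id) ⁻¹' Gh
    with hP
  have hempty : P ∅ := ⟨fun _ _ => 0, measurable_const, ∅, MeasurableSet.empty, by simp⟩
  have hcompl : ∀ s, P s → P sᶜ := by
    rintro s ⟨Φ, hΦ, Gh, hGh, rfl⟩
    exact ⟨Φ, hΦ, Ghᶜ, hGh.compl, by rw [preimage_compl]⟩
  have hunion : ∀ s : ℕ → Set (Ω × (Fin k → ℝ)), (∀ n, P (s n)) → P (⋃ n, s n) := by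
    intro s hs
    choose Φs hΦs Ghs hGhs hGs using hs
    set Φ : Ω → ℕ → ℝ := fun ω j => Φs (Nat.unpair j).1 ω (Nat.unpair j).2 with hΦdef
    have hΦ : Measurable[F] Φ := by
      rw [measurable_pi_iff]
      intro j
      exact (measurable_pi_iff.1 (hΦs (Nat.unpair j).1)) (Nat.unpair j).2
    set r : ℕ → (ℕ → ℝ) → (ℕ → ℝ) := fun n x i => x (Nat.pair n i) with hrdef
    have hr : ∀ n, Measurable (r n) := by
      intro n
      rw [measurable_pi_iff]
      exact fun i => measurable_pi_apply _
    have hcomp : ∀ n, (r n) ∘ Φ = Φs n := by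
      intro n
      funext ω i
      simp [hrdef, hΦdef, Nat.unpair_pair]
    refine ⟨Φ, hΦ, ⋃ n, (Prod.map (r n) id) ⁻¹' (Ghs n), MeasurableSet.iUnion (fun n =>
      ((hr n).prodMap measurable_id) (hGhs n)), ?_⟩
    rw [preimage_iUnion]
    refine iUnion_congr (fun n => ?_)
    rw [hGs n, ← preimage_comp, Prod.map_comp_map, hcomp, CompTriple.comp_eq]
  let m' : MeasurableSpace (Ω × (Fin k → ℝ)) :=
    { MeasurableSet' := P
      measurableSet_empty := hempty
      measurableSet_compl := hcompl
      measurableSet_iUnion := hunion }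
  have hle : F.prod inferInstance ≤ m' := by
    refine sup_le ?_ ?_
    · rintro s ⟨A, hA, rfl⟩
      refine ⟨fun ω _ => if ω ∈ A then 1 else 0, ?_, {x | x.1 0 = 1},
        (measurable_pi_apply 0).comp measurable_fst (measurableSet_singleton 1), ?_⟩
      · rw [measurable_pi_iff]
        intro _
        exact Measurable.ite hA measurable_const measurable_const
      · ext p
        by_cases h : p.1 ∈ A <;> simp [Prod.map, h]
    · rintro s ⟨B, hB, rfl⟩
      exact ⟨fun _ _ => 0, measurable_const, univ ×ˢ B, MeasurableSet.univ.prod hB, by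
        ext p; simp [Prod.map]⟩
  exact hle G hG

theorem hitting_measurable {Ω : Type*} [m0 : MeasurableSpace Ω] (μ : Measure Ω)
    [IsFiniteMeasure μ] {F : MeasurableSpace Ω} (hF : F ≤ m0)
    (hnull : ∀ s : Set Ω, μ s = 0 → MeasurableSet[F] s)
    {k : ℕ} {G : Set (Ω × (Fin k → ℝ))} (hG : MeasurableSet[F.prod inferInstance] G)
    {B : Set (Fin k → ℝ)} (hB : MeasurableSet B) :
    MeasurableSet[F] {ω | ∃ b ∈ B, (ω, b) ∈ G} := by
  obtain ⟨Φ, hΦ, Gh, hGh, rfl⟩ := exists_factorization_s8 hG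
  have hA : AnalyticSet (Prod.fst '' (Gh ∩ (univ ×ˢ B))) :=
    (hGh.inter (MeasurableSet.univ.prod hB)).analyticSet_image measurable_fst
  have hset : {ω | ∃ b ∈ B, (ω, b) ∈ (Prod.map Φ id) ⁻¹' Gh}
      = Φ ⁻¹' (Prod.fst '' (Gh ∩ (univ ×ˢ B))) := by
    ext ω
    constructor
    · rintro ⟨b, hbB, hb⟩
      exact ⟨(Φ ω, b), ⟨hb, ⟨trivial, hbB⟩⟩, rfl⟩
    · rintro ⟨⟨x, b⟩, ⟨hb, ⟨-, hbB⟩⟩, hx⟩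
      refine ⟨b, hbB, ?_⟩
      have heq : Prod.map Φ id (ω, b) = (x, b) := by
        simp only [Prod.map, id_eq, Prod.mk.injEq]
        exact ⟨hx.symm, trivial⟩
      show Prod.map Φ id (ω, b) ∈ Gh
      rw [heq]
      exact hb
  rw [hset]
  have hΦ0 : Measurable[m0] Φ := fun s hs => hF _ (hΦ hs)
  set ν : Measure (ℕ → ℝ) := @Measure.map _ _ m0 _ Φ μ with hν
  haveI : IsFiniteMeasure ν := by
    constructor
    rw [hν, Measure.map_apply hΦ0 MeasurableSet.univ]
    exact measure_lt_top μ _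
  obtain ⟨B₁, B₂, hB₁, hB₂, hB₁A, hAB₂, hnu⟩ := analyticSet_sandwich ν hA
  have hkey : μ (Φ ⁻¹' (B₂ \ B₁)) = 0 := by
    rw [hν] at hnu
    rw [← Measure.map_apply hΦ0 (hB₂.diff hB₁)]
    exact hnu
  have hsub : Φ ⁻¹' (Prod.fst '' (Gh ∩ (univ ×ˢ B))) \ Φ ⁻¹' B₁ ⊆ Φ ⁻¹' (B₂ \ B₁) := by
    intro ω ⟨h1, h2⟩
    exact ⟨hAB₂ h1, h2⟩
  rw [← union_diff_cancel (preimage_mono hB₁A :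
    Φ ⁻¹' B₁ ⊆ Φ ⁻¹' (Prod.fst '' (Gh ∩ (univ ×ˢ B))))]
  exact (hΦ hB₁).union (hnull _ (measure_mono_null hsub hkey))


/-- Least-index measurable selection among a countable family of measurable sets. -/
theorem least_index_selection {Ω : Type*} {F : MeasurableSpace Ω}
    (C : ℕ → Set Ω) (hC : ∀ j, MeasurableSet[F] (C j)) :
    ∃ g : Ω → ℕ, Measurable[F] g ∧ (∀ ω, (∃ j, ω ∈ C j) → ω ∈ C (g ω)) := by
  classical
  refine ⟨fun ω => if h : ∃ j, ω ∈ C j then Nat.find h else 0, ?_, ?_⟩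
  · have : ∀ j : ℕ, MeasurableSet[F]
        ((fun ω => if h : ∃ j, ω ∈ C j then Nat.find h else 0) ⁻¹' {j}) := by
      intro j
      have hpre : (fun ω => if h : ∃ j, ω ∈ C j then Nat.find h else 0) ⁻¹' {j}
          = (C j ∩ ⋂ i ∈ Finset.range j, (C i)ᶜ)
            ∪ (if j = 0 then ⋂ i, (C i)ᶜ else ∅) := by
        ext ω
        by_cases h : ∃ i, ω ∈ C i
        · simp only [mem_preimage, mem_singleton_iff, dif_pos h, mem_union, mem_inter_iff,
            mem_iInter, mem_compl_iff, Finset.mem_range]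
          constructor
          · intro hj
            subst hj
            exact Or.inl ⟨Nat.find_spec h, fun i hi => Nat.find_min h hi⟩
          · rintro (⟨h1, h2⟩ | hbad)
            · exact (Nat.find_eq_iff h).2 ⟨h1, fun i hi => h2 i hi⟩
            · rcases h with ⟨i, hi⟩
              by_cases hj : j = 0 <;> simp [hj] at hbad
              · exact absurd hi (hbad i)
        · simp only [mem_preimage, mem_singleton_iff, dif_neg h, mem_union, mem_inter_iff]
          push_neg at h
          constructor
          · intro hj
            subst hj
            simp [h]
          · rintro (⟨h1, -⟩ | hbad)
            · exact absurd h1 (h j)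
            · by_cases hj : j = 0
              · omega
              · simp [hj] at hbad
      rw [hpre]
      refine MeasurableSet.union ((hC j).inter (MeasurableSet.biInter (to_countable _)
        (fun i _ => (hC i).compl))) ?_
      by_cases hj : j = 0 <;> simp [hj]
      · exact MeasurableSet.iInter (fun i => (hC i).compl)
    exact measurable_to_countable' this
  · intro ω h
    simp only [dif_pos h]
    exact Nat.find_spec h

/-- A.e. measurable selection for a multifunction with product-measurable graph and
closed values, over a measurable space containing the null sets of `μ`. -/
theorem measurable_selection {Ω : Type*} [m0 : MeasurableSpace Ω] (μ : Measure Ω)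
    [IsFiniteMeasure μ] {F : MeasurableSpace Ω} (hF : F ≤ m0)
    (hnull : ∀ s : Set Ω, μ s = 0 → MeasurableSet[F] s)
    {k : ℕ} {G : Set (Ω × (Fin k → ℝ))} (hG : MeasurableSet[F.prod inferInstance] G)
    (hclosed : ∀ ω, IsClosed {b | (ω, b) ∈ G}) :
    ∃ σ : Ω → (Fin k → ℝ), Measurable[F] σ ∧
      ∀ ω, {b | (ω, b) ∈ G}.Nonempty → (ω, σ ω) ∈ G := by
  classical
  obtain ⟨q, hq⟩ : ∃ q : ℕ → (Fin k → ℝ), DenseRange q :=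
    ⟨TopologicalSpace.denseSeq (Fin k → ℝ), TopologicalSpace.denseRange_denseSeq _⟩
  have hH : ∀ (c : Fin k → ℝ) (r : ℝ),
      MeasurableSet[F] {ω | ∃ b ∈ Metric.closedBall c r, (ω, b) ∈ G} := fun c r =>
    @hitting_measurable Ω m0 μ inferInstance F hF hnull k G hG _
      Metric.isClosed_closedBall.measurableSet
  -- the step construction
  have step : ∀ (n : ℕ) (f : Ω → (Fin k → ℝ)), Measurable[F] f →
      ∃ f' : Ω → (Fin k → ℝ), Measurable[F] f' ∧
        (∀ ω, dist (f' ω) (f ω) ≤ (1/2)^n + (1/2)^(n+1)) ∧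
        (∀ ω, (∃ b ∈ Metric.closedBall (f ω) ((1/2)^n), (ω, b) ∈ G) →
          ∃ b ∈ Metric.closedBall (f' ω) ((1/2)^(n+1)), (ω, b) ∈ G) := by
    intro n f hf
    set C : ℕ → Set Ω := fun j =>
      {ω | ∃ b ∈ Metric.closedBall (q j) ((1/2)^(n+1)), (ω, b) ∈ G}
        ∩ {ω | dist (q j) (f ω) ≤ (1/2)^n + (1/2)^(n+1)} with hCdef
    have hCmeas : ∀ j, MeasurableSet[F] (C j) := by
      intro j
      refine (hH _ _).inter ?_
      have : Measurable[F] (fun ω => dist (q j) (f ω)) :=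
        (continuous_const.dist continuous_id).measurable.comp hf
      exact this measurableSet_Iic
    obtain ⟨g, hg, hgspec⟩ := least_index_selection C hCmeas
    set U : Set Ω := ⋃ j, C j with hUdef
    have hU : MeasurableSet[F] U := MeasurableSet.iUnion hCmeas
    refine ⟨fun ω => if ω ∈ U then q (g ω) else f ω, ?_, ?_, ?_⟩
    · refine Measurable.ite hU ?_ hf
      exact (measurable_from_top (f := q)).comp hg
    · intro ω
      by_cases h : ω ∈ U
      · dsimp only
        rw [if_pos h]
        have := hgspec ω (mem_iUnion.1 h)
        exact this.2
      · dsimp only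
        rw [if_neg h, dist_self]
        positivity
    · intro ω ⟨b, hb1, hb2⟩
      -- ω is in some C j
      have hωU : ω ∈ U := by
        obtain ⟨j, hj⟩ := hq.exists_dist_lt b (show (0:ℝ) < (1/2)^(n+1) by positivity)
        refine mem_iUnion.2 ⟨j, ⟨⟨b, ?_, hb2⟩, ?_⟩⟩
        · exact Metric.mem_closedBall.2 hj.le
        · calc dist (q j) (f ω) ≤ dist (q j) b + dist b (f ω) := dist_triangle _ _ _
            _ ≤ (1/2)^(n+1) + (1/2)^n :=
                add_le_add (by rw [dist_comm]; exact hj.le) (Metric.mem_closedBall.1 hb1)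
            _ = (1/2)^n + (1/2)^(n+1) := by ring
      dsimp only
      rw [if_pos hωU]
      obtain ⟨⟨b', hb'1, hb'2⟩, -⟩ := hgspec ω (mem_iUnion.1 hωU)
      exact ⟨b', hb'1, hb'2⟩
  -- base step
  have base : ∃ f0 : Ω → (Fin k → ℝ), Measurable[F] f0 ∧
      ∀ ω, {b | (ω, b) ∈ G}.Nonempty →
        ∃ b ∈ Metric.closedBall (f0 ω) ((1/2)^0), (ω, b) ∈ G := by
    set C : ℕ → Set Ω := fun j =>
      {ω | ∃ b ∈ Metric.closedBall (q j) 1, (ω, b) ∈ G} with hCdef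
    obtain ⟨g, hg, hgspec⟩ := least_index_selection C (fun j => hH _ _)
    refine ⟨fun ω => q (g ω), (measurable_from_top (f := q)).comp hg, ?_⟩
    rintro ω ⟨b, hb⟩
    have hωU : ∃ j, ω ∈ C j := by
      obtain ⟨j, hj⟩ := hq.exists_dist_lt b (show (0:ℝ) < 1 by norm_num)
      exact ⟨j, ⟨b, Metric.mem_closedBall.2 hj.le, hb⟩⟩
    obtain ⟨b', hb'1, hb'2⟩ := hgspec ω hωU
    exact ⟨b', by simpa using hb'1, hb'2⟩
  obtain ⟨f0, hf0, hf0spec⟩ := base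
  -- iterate
  let Y : ℕ → {f : Ω → (Fin k → ℝ) // Measurable[F] f} := fun n =>
    Nat.rec ⟨f0, hf0⟩ (fun n f => ⟨Classical.choose (step n f.1 f.2),
      (Classical.choose_spec (step n f.1 f.2)).1⟩) n
  have hYsucc : ∀ n, (Y (n+1)).1 = Classical.choose (step n (Y n).1 (Y n).2) := fun n => rfl
  have hYdist : ∀ n ω, dist ((Y (n+1)).1 ω) ((Y n).1 ω) ≤ (1/2)^n + (1/2)^(n+1) := by
    intro n ω
    rw [hYsucc]
    exact (Classical.choose_spec (step n (Y n).1 (Y n).2)).2.1 ω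
  have hYinv : ∀ n ω, {b | (ω, b) ∈ G}.Nonempty →
      ∃ b ∈ Metric.closedBall ((Y n).1 ω) ((1/2)^n), (ω, b) ∈ G := by
    intro n
    induction n with
    | zero => exact hf0spec
    | succ n ih =>
      intro ω hne
      rw [hYsucc]
      exact (Classical.choose_spec (step n (Y n).1 (Y n).2)).2.2 ω (ih ω hne)
  -- Cauchy and limit
  have hcauchy : ∀ ω, CauchySeq (fun n => (Y n).1 ω) := by
    intro ω
    apply cauchySeq_of_le_geometric (1/2) 3 (by norm_num)
    intro n
    rw [dist_comm]
    calc dist ((Y (n+1)).1 ω) ((Y n).1 ω) ≤ (1/2)^n + (1/2)^(n+1) := hYdist n ω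
      _ ≤ 3 * (1/2)^n := by
          rw [pow_succ]
          nlinarith [pow_pos (show (0:ℝ) < 1/2 by norm_num) n]
  have hlim : ∀ ω, ∃ L : (Fin k → ℝ), Tendsto (fun n => (Y n).1 ω) atTop (𝓝 L) :=
    fun ω => cauchySeq_tendsto_of_complete (hcauchy ω)
  choose σ hσ using hlim
  refine ⟨σ, ?_, ?_⟩
  · refine @measurable_of_tendsto_metrizable Ω (Fin k → ℝ) F _ _ _ _ (fun n => (Y n).1) σ
      (fun n => (Y n).2) ?_
    rw [tendsto_pi_nhds]
    exact hσ
  · intro ω hne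
    have hb : ∀ n, ∃ b, (ω, b) ∈ G ∧ dist b ((Y n).1 ω) ≤ (1/2)^n := by
      intro n
      obtain ⟨b, hb1, hb2⟩ := hYinv n ω hne
      exact ⟨b, hb2, Metric.mem_closedBall.1 hb1⟩
    choose bs hbs1 hbs2 using hb
    have hbtend : Tendsto bs atTop (𝓝 (σ ω)) := by
      rw [tendsto_iff_dist_tendsto_zero]
      have h1 : ∀ n, dist (bs n) (σ ω) ≤ (1/2)^n + dist ((Y n).1 ω) (σ ω) := by
        intro n
        calc dist (bs n) (σ ω) ≤ dist (bs n) ((Y n).1 ω) + dist ((Y n).1 ω) (σ ω) :=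
              dist_triangle _ _ _
          _ ≤ (1/2)^n + dist ((Y n).1 ω) (σ ω) := add_le_add_left (hbs2 n) _
      refine squeeze_zero (fun n => dist_nonneg) h1 ?_
      have h2 : Tendsto (fun n : ℕ => ((1:ℝ)/2)^n) atTop (𝓝 0) :=
        tendsto_pow_atTop_nhds_zero_of_lt_one (by norm_num) (by norm_num)
      have h3 : Tendsto (fun n => dist ((Y n).1 ω) (σ ω)) atTop (𝓝 0) :=
        tendsto_iff_dist_tendsto_zero.1 (hσ ω)
      simpa using h2.add h3
    exact (hclosed ω).mem_of_tendsto hbtend (Filter.Eventually.of_forall hbs1)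


theorem graph_meas {Ω : Type*} [F : MeasurableSpace Ω] {j k : ℕ}
    {Z : Set (Ω × ((Fin j → ℝ) × (Fin k → ℝ)))}
    (hZ : MeasurableSet[F.prod inferInstance] Z)
    {a : Ω → Fin j → ℝ} (ha : Measurable a) :
    MeasurableSet[F.prod inferInstance] {p : Ω × (Fin k → ℝ) | (p.1, (a p.1, p.2)) ∈ Z} := by
  have hm : Measurable (fun p : Ω × (Fin k → ℝ) => (p.1, (a p.1, p.2))) :=
    measurable_fst.prodMk ((ha.comp measurable_fst).prodMk measurable_snd)
  exact hm hZ

theorem meas_sub'' {Ω : Type*} [F : MeasurableSpace Ω] {k : ℕ} {f g : Ω → Fin k → ℝ}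
    (hf : Measurable f) (hg : Measurable g) : Measurable (fun ω => f ω - g ω) := hf.sub hg

theorem meas_add'' {Ω : Type*} [F : MeasurableSpace Ω] {k : ℕ} {f g : Ω → Fin k → ℝ}
    (hf : Measurable f) (hg : Measurable g) : Measurable (fun ω => f ω + g ω) := hf.add hg

end AuxSelection


theorem vng_step_selection
    {Ω : Type*} [m0 : MeasurableSpace Ω] {μ : MeasureTheory.Measure Ω}
    [MeasureTheory.IsProbabilityMeasure μ]
    {N : ℕ} {m : ℕ → ℕ} (S : VNG Ω μ N m) (hA2 : S.A2)
    (t : ℕ) (h1 : 1 ≤ t) (h2 : t ≤ N)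
    (a : Ω → Fin (m (t-1)) → ℝ) (ha : Measurable[S.F t] a)
    (haX : ∀ᵐ ω ∂μ, a ω ∈ S.X (t-1) ω) :
    ∃ w : Ω → Fin (m t) → ℝ, Measurable[S.F t] w ∧
      ∀ᵐ ω ∂μ, (a ω, w ω) ∈ S.Z t ω := by
  have hG : MeasurableSet[(S.F t).prod inferInstance]
      {p : Ω × (Fin (m t) → ℝ) | (a p.1, p.2) ∈ S.Z t p.1} :=
    @graph_meas Ω (S.F t) (m (t-1)) (m t) {q | q.2 ∈ S.Z t q.1} (S.Z_meas t h1 h2) a ha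
  have hclosed : ∀ ω, IsClosed {b : Fin (m t) → ℝ | (a ω, b) ∈ S.Z t ω} := by
    intro ω
    have hpre : {b : Fin (m t) → ℝ | (a ω, b) ∈ S.Z t ω}
        = (Prod.mk (a ω)) ⁻¹' (S.Z t ω) := rfl
    rw [hpre]
    exact (S.Z_closed t h1 h2 ω).preimage (Continuous.prodMk_right (a ω))
  obtain ⟨σ, hσm, hσ⟩ := @measurable_selection Ω m0 μ inferInstance (S.F t) (S.F_le t)
    (S.F_null t) (m t) _ hG hclosed
  refine ⟨σ, hσm, ?_⟩
  filter_upwards [haX] with ω hω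
  obtain ⟨b, hbX, hbZ⟩ := hA2 t h1 h2 ω (a ω) hω
  exact hσ ω ⟨b, hbZ⟩

/-- **Lemma 3**: if `ζ = (v₀, u₁, v₁, …, u_N, v_N, u_{N+1}) ∈ 𝒲` satisfies
`v_{t-1} - u_t ∈ 𝒰_t` for `t = 1, …, N+1`, then there is a path `(y_0, …, y_N)`
with `y_0 = v_0` and `y_t - v_t ∈ 𝒳_t` for `t = 0, 1, …, N`. -/
theorem path_dominating_W_sequence
    {Ω : Type*} [m0 : MeasurableSpace Ω] {μ : MeasureTheory.Measure Ω}
    [MeasureTheory.IsProbabilityMeasure μ]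
    {N : ℕ} {m : ℕ → ℕ} (S : VNG Ω μ N m)
    (hA2 : S.A2) (hA3 : S.A3)
    (ψ : Ω → (Fin (m N) → ℝ) → ℝ) (hψ : S.MemPsi ψ)
    (x₀ : Ω → Fin (m 0) → ℝ) (hx₀ : S.IsInitial x₀)
    (v : (t : ℕ) → Ω → Fin (m t) → ℝ) (u : (t : ℕ) → Ω → Fin (m (t - 1)) → ℝ)
    (hW : S.MemW ψ x₀ v u)
    (hdiff : ∀ t, 1 ≤ t → t ≤ N + 1 →
      MemLinf μ (S.F t) (fun ω => v (t - 1) ω - u t ω) ∧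
      ∀ᵐ ω ∂μ, v (t - 1) ω - u t ω ∈ S.X (t - 1) ω) :
    ∃ y : (t : ℕ) → Ω → Fin (m t) → ℝ,
      S.IsPath y ∧ y 0 = v 0 ∧
      ∀ t, t ≤ N →
        MemLinf μ (S.F t) (fun ω => y t ω - v t ω) ∧
        ∀ᵐ ω ∂μ, y t ω - v t ω ∈ S.X t ω := by
  classical
  obtain ⟨hv0, hv, hu, huv, -⟩ := hW
  obtain ⟨Kc, hKc⟩ := hA3
  have l1_nonneg : ∀ {k : ℕ} (x : Fin k → ℝ), 0 ≤ l1 x := fun x =>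
    Finset.sum_nonneg (fun i _ => abs_nonneg _)
  have l1_sub_le : ∀ {k : ℕ} (x y : Fin k → ℝ), l1 (x - y) ≤ l1 x + l1 y := by
    intro k x y
    rw [l1, l1, l1, ← Finset.sum_add_distrib]
    exact Finset.sum_le_sum (fun i _ => abs_sub (x i) (y i))
  have zadd : ∀ (t : ℕ), 1 ≤ t → t ≤ N → ∀ ω,
      ∀ z z' : (Fin (m (t-1)) → ℝ) × (Fin (m t) → ℝ),
      z ∈ S.Z t ω → z' ∈ S.Z t ω → z + z' ∈ S.Z t ω := by
    intro t h1 h2 ω z z' hz hz'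
    have hcvx := S.Z_convex t h1 h2 ω hz hz'
      (by norm_num : (0:ℝ) ≤ 1/2) (by norm_num : (0:ℝ) ≤ 1/2) (by norm_num)
    have hcone := S.Z_cone t h1 h2 ω _ hcvx 2 (by norm_num)
    have h21 : (2:ℝ) * (1/2) = 1 := by norm_num
    rw [smul_add, smul_smul, smul_smul, h21, one_smul, one_smul] at hcone
    exact hcone
  let Inv : (t : ℕ) → (Ω → Fin (m t) → ℝ) → Prop := fun t f => t ≤ N →
    Measurable[S.F t] f ∧ (∃ C, ∀ᵐ ω ∂μ, l1 (f ω) ≤ C) ∧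
    (∀ᵐ ω ∂μ, f ω - v t ω ∈ S.X t ω) ∧ (∀ᵐ ω ∂μ, f ω ∈ S.X t ω)
  have inv0 : Inv 0 (v 0) := by
    intro h0
    refine ⟨(hv 0 h0).1.1, (hv 0 h0).1.2, ?_, (hv 0 h0).2⟩
    filter_upwards [(hv 0 h0).2] with ω hω
    have h00 := S.X_cone 0 h0 ω (v 0 ω) hω 0 le_rfl
    rw [zero_smul] at h00
    simpa [sub_self] using h00
  have main_step : ∀ (t : ℕ) (f : Ω → Fin (m t) → ℝ), Inv t f →
      ∃ f' : Ω → Fin (m (t+1)) → ℝ, Inv (t+1) f' ∧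
        (t + 1 ≤ N → ∀ᵐ ω ∂μ, (f ω, f' ω) ∈ S.Z (t+1) ω) := by
    intro t f hInv
    by_cases hle : t + 1 ≤ N
    · have htN : t ≤ N := by omega
      obtain ⟨hfm, ⟨Cf, hCf⟩, hfvX, hfX⟩ := hInv htN
      have hfm' : Measurable[S.F (t+1)] (fun ω => f ω - v t ω) := fun s hs =>
        S.F_mono (Nat.le_succ t) _
          ((@meas_sub'' Ω (S.F t) (m t) f (v t) hfm (hv t htN).1.1) hs)
      obtain ⟨w₁, hw₁m, hw₁Z⟩ := vng_step_selection S hA2 (t+1) (by omega) hle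
        (fun ω => f ω - v t ω) hfm' hfvX
      obtain ⟨hdm, hdX⟩ := hdiff (t+1) (by omega) (by omega)
      let u' : Ω → Fin (m t) → ℝ := u (t+1)
      have hdm' : Measurable[S.F (t+1)] (fun ω => v t ω - u' ω) := hdm.1
      have hdX' : ∀ᵐ ω ∂μ, v t ω - u' ω ∈ S.X t ω := hdX
      obtain ⟨w₂, hw₂m, hw₂Z⟩ := vng_step_selection S hA2 (t+1) (by omega) hle
        (fun ω => v t ω - u' ω) hdm' hdX' 
      have huvZ : ∀ᵐ ω ∂μ, (⟨u' ω, v (t+1) ω⟩ :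
          (Fin (m (t+1-1)) → ℝ) × (Fin (m (t+1)) → ℝ)) ∈ S.Z (t+1) ω :=
        huv (t+1) (by omega) hle
      have hkey : ∀ᵐ ω ∂μ, ((f ω - u' ω, w₁ ω + w₂ ω)
            ∈ S.Z (t+1) ω)
          ∧ ((f ω, w₁ ω + w₂ ω + v (t+1) ω) ∈ S.Z (t+1) ω) := by
        filter_upwards [hw₁Z, hw₂Z, huvZ] with ω hz1 hz2 hz3
        have hsum1 := zadd (t+1) (by omega) hle ω _ _ hz1 hz2
        have hmem1 : (f ω - u' ω, w₁ ω + w₂ ω)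
            ∈ S.Z (t+1) ω := by
          have heq1 : ((f ω - v t ω, w₁ ω) + (v t ω - u' ω, w₂ ω)
              : (Fin (m (t+1-1)) → ℝ) × (Fin (m (t+1)) → ℝ))
              = (f ω - u' ω, w₁ ω + w₂ ω) := by
            refine Prod.ext ?_ rfl
            funext i
            show f ω i - v t ω i + (v t ω i - u' ω i) = f ω i - u' ω i
            ring
          rw [← heq1]
          exact hsum1
        refine ⟨hmem1, ?_⟩
        have hsum2 := zadd (t+1) (by omega) hle ω _ _ hmem1 hz3
        have heq2 : ((f ω - u' ω, w₁ ω + w₂ ω)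
              + (u' ω, v (t+1) ω)
            : (Fin (m (t+1-1)) → ℝ) × (Fin (m (t+1)) → ℝ))
            = (f ω, w₁ ω + w₂ ω + v (t+1) ω) := by
          refine Prod.ext ?_ rfl
          funext i
          show f ω i - u' ω i + u' ω i = f ω i
          ring
        rw [← heq2]
        exact hsum2
      refine ⟨fun ω => w₁ ω + w₂ ω + v (t+1) ω, ?_, ?_⟩
      · intro _
        refine ⟨?_, ?_, ?_, ?_⟩
        · exact @meas_add'' Ω (S.F (t+1)) (m (t+1)) _ (v (t+1))
            (@meas_add'' Ω (S.F (t+1)) (m (t+1)) w₁ w₂ hw₁m hw₂m) (hv (t+1) hle).1.1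
        · refine ⟨|Kc (t+1)| * max Cf 0, ?_⟩
          filter_upwards [hCf, hkey] with ω hb hk
          have hA3app := hKc (t+1) (by omega) hle ω _ hk.2
          refine le_trans hA3app ?_
          calc Kc (t+1) * l1 (f ω) ≤ |Kc (t+1)| * l1 (f ω) :=
                mul_le_mul_of_nonneg_right (le_abs_self _) (l1_nonneg _)
            _ ≤ |Kc (t+1)| * max Cf 0 :=
                mul_le_mul_of_nonneg_left (le_trans hb (le_max_left _ _)) (abs_nonneg _)
        · filter_upwards [hkey] with ω hk
          have hmem := S.Z_sub (t+1) (by omega) hle ω hk.1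
          have hrw : w₁ ω + w₂ ω + v (t+1) ω - v (t+1) ω = w₁ ω + w₂ ω :=
            add_sub_cancel_right _ _
          rw [hrw]
          exact hmem.2
        · filter_upwards [hkey] with ω hk
          exact (S.Z_sub (t+1) (by omega) hle ω hk.2).2
      · intro _
        filter_upwards [hkey] with ω hk
        exact hk.2
    · exact ⟨fun _ _ => 0, fun h => absurd h hle, fun h => absurd h hle⟩
  let Y : (t : ℕ) → {f : Ω → Fin (m t) → ℝ // Inv t f} := fun t =>
    Nat.rec ⟨v 0, inv0⟩ (fun t p => ⟨Classical.choose (main_step t p.1 p.2),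
      (Classical.choose_spec (main_step t p.1 p.2)).1⟩) t
  refine ⟨fun t => (Y t).1, ⟨?_, ?_⟩, rfl, ?_⟩
  · intro t ht
    exact ⟨⟨((Y t).2 ht).1, ((Y t).2 ht).2.1⟩, ((Y t).2 ht).2.2.2⟩
  · intro t h1 h2
    obtain ⟨s, rfl⟩ : ∃ s, t = s + 1 := ⟨t - 1, by omega⟩
    exact (Classical.choose_spec (main_step s (Y s).1 (Y s).2)).2 h2
  · intro t ht
    obtain ⟨Cy, hCy⟩ := ((Y t).2 ht).2.1
    obtain ⟨Cv, hCv⟩ := (hv t ht).1.2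
    refine ⟨⟨?_, Cy + Cv, ?_⟩, ((Y t).2 ht).2.2.1⟩
    · exact @meas_sub'' Ω (S.F t) (m t) _ (v t) ((Y t).2 ht).1 (hv t ht).1.1
    · filter_upwards [hCy, hCv] with ω h1 h2
      exact le_trans (l1_sub_le _ _) (add_le_add h1 h2)
end
end
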